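/- arXiv:2412.11055 — 9 statements merged into one kernel-verified Lean document; each statement's English description precedes it below -/
import Mathlib

section
/- Let τ be an uncountable cardinal. A (Hausdorff) topological group G is pseudo-τ-fine if and only if every closed subgroup M of G with ψ(G/M) ≤ τ contains a closed subgroup N of G such that ψ(G/N) ≤ ω. -/
open Cardinal Topology Pointwise

universe u

/-- The pseudocharacter of a topological space at a point: the least cardinality of a family of
open neighbourhoods of the point whose intersection is the singleton of that point. -/
noncomputable def psiAt (X : Type u) [TopologicalSpace X] (x : X) : Cardinal.{u} :=
  sInf {c | ∃ S : Set (Set X), (∀ U ∈ S, IsOpen U ∧ x ∈ U) ∧ ⋂₀ S = {x} ∧ #S = c}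

/-- The pseudocharacter of a topological group. -/
noncomputable def psi (G : Type u) [TopologicalSpace G] [Group G] : Cardinal.{u} :=
  psiAt G 1

/-- A topological group `G` is pseudo-`τ`-fine if for every family of at most `τ` many
neighbourhoods of the identity there is a countable family of identity neighbourhoods whose
intersection is contained in the intersection of the given family. -/
def IsPseudoTauFine (τ : Cardinal.{u}) (G : Type u) [TopologicalSpace G] [Group G] : Prop :=
  ∀ (ι : Type u) (U : ι → Set G), #ι ≤ τ → (∀ i, U i ∈ 𝓝 (1 : G)) →
    ∃ V : ℕ → Set G, (∀ n, V n ∈ 𝓝 (1 : G)) ∧ (⋂ n, V n) ⊆ ⋂ i, U i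

/-- A topological space is pseudocompact if every continuous real-valued function on it
is bounded. -/
def Pseudocompact (X : Type u) [TopologicalSpace X] : Prop :=
  ∀ f : X → ℝ, Continuous f → ∃ C : ℝ, ∀ x, |f x| ≤ C

/-- A topological group is precompact (totally bounded, i.e. its Weil completion is compact)
if every identity neighbourhood has finitely many translates covering the group. -/
def PrecompactGroup (G : Type u) [TopologicalSpace G] [Group G] : Prop :=
  ∀ U ∈ 𝓝 (1 : G), ∃ F : Finset G, (Set.univ : Set G) ⊆ ⋃ g ∈ F, g • U

/-- The pseudo-fineness index: least cardinal `τ` such that `G` is not pseudo-`τ`-fine. -/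
noncomputable def pfi (G : Type u) [TopologicalSpace G] [Group G] : Cardinal.{u} :=
  sInf {τ | ¬ IsPseudoTauFine τ G}

/-- The weight of a topological space: least cardinality of a base. -/
noncomputable def wt (X : Type u) [TopologicalSpace X] : Cardinal.{u} :=
  sInf {c | ∃ B : Set (Set X), TopologicalSpace.IsTopologicalBasis B ∧ #B = c}

/-- The character of a topological space at a point: least cardinality of a neighbourhood base. -/
noncomputable def chiAt (X : Type u) [TopologicalSpace X] (x : X) : Cardinal.{u} :=
  sInf {c | ∃ S : Set (Set X), (∀ U ∈ S, U ∈ 𝓝 x) ∧ (∀ V ∈ 𝓝 x, ∃ U ∈ S, U ⊆ V) ∧ #S = c}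

/-- The density of a topological space: least cardinality of a dense subset. -/
noncomputable def dens (X : Type u) [TopologicalSpace X] : Cardinal.{u} :=
  sInf {c | ∃ s : Set X, Dense s ∧ #s = c}

/-- A topological group is (isomorphic to) a finite-dimensional real Lie group. -/
def IsLieGroupTop (L : Type u) [TopologicalSpace L] [Group L] : Prop :=
  ∃ (n : ℕ) (_cs : ChartedSpace (EuclideanSpace ℝ (Fin n)) L),
    LieGroup (modelWithCornersSelf ℝ (EuclideanSpace ℝ (Fin n))) (⊤ : ℕ∞) L

/-- The set of co-Lie subgroups of a topological group: closed normal subgroups with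
Lie quotient. -/
def coLieSubgroups (G : Type u) [TopologicalSpace G] [Group G] : Set (Subgroup G) :=
  {N | IsClosed (N : Set G) ∧ ∃ _h : N.Normal, IsLieGroupTop (G ⧸ N)}

/-- The co-Lie character: the number of co-Lie subgroups. -/
noncomputable def cL (G : Type u) [TopologicalSpace G] [Group G] : Cardinal.{u} :=
  #(coLieSubgroups G)


section Aux

variable {G : Type u} [TopologicalSpace G] [Group G] [IsTopologicalGroup G]

lemma mk_eq_mk_one_iff (M : Subgroup G) (g : G) :
    (QuotientGroup.mk g : G ⧸ M) = QuotientGroup.mk 1 ↔ g ∈ M := by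
  rw [QuotientGroup.eq]
  simp

lemma symStep {U : Set G} (hU : U ∈ 𝓝 (1 : G)) :
    ∃ W : Set G, IsOpen W ∧ (1 : G) ∈ W ∧ W⁻¹ = W ∧ W * W ⊆ U := by
  obtain ⟨V, hVo, hV1, hVU⟩ := exists_open_nhds_one_mul_subset hU
  refine ⟨V ∩ V⁻¹, hVo.inter hVo.inv, ⟨hV1, by simpa using hV1⟩, ?_, ?_⟩
  · ext x; simp [Set.mem_inv, and_comm]
  · exact (Set.mul_subset_mul Set.inter_subset_left Set.inter_subset_left).trans hVU

lemma exists_W (V : ℕ → Set G) (hV : ∀ n, V n ∈ 𝓝 (1 : G)) :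
    ∃ W : ℕ → Set G, (∀ n, IsOpen (W n)) ∧ (∀ n, (1:G) ∈ W n) ∧ (∀ n, W n ⊆ V n) ∧
      (∀ n, (W n)⁻¹ = W n) ∧ ∀ n, W (n+1) * W (n+1) ⊆ W n := by
  have hc : ∀ U : Set G, ∃ W : Set G, U ∈ 𝓝 (1:G) →
      IsOpen W ∧ (1:G) ∈ W ∧ W⁻¹ = W ∧ W * W ⊆ U := by
    intro U
    by_cases h : U ∈ 𝓝 (1:G)
    · obtain ⟨W, h1, h2, h3, h4⟩ := symStep h
      exact ⟨W, fun _ => ⟨h1, h2, h3, h4⟩⟩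
    · exact ⟨∅, fun h' => absurd h' h⟩
  choose c hc using hc
  set W : ℕ → Set G := fun n => Nat.rec (c (V 0)) (fun n Wn => c (V (n+1) ∩ Wn)) n with hWdef
  have key : ∀ n, W n ∈ 𝓝 (1:G) ∧ IsOpen (W n) ∧ (1:G) ∈ W n ∧ (W n)⁻¹ = W n ∧
      W n * W n ⊆ V n ∧ (∀ m, n = m + 1 → W n * W n ⊆ W m) := by
    intro n
    induction n with
    | zero =>
      obtain ⟨h1, h2, h3, h4⟩ := hc (V 0) (hV 0)
      exact ⟨h1.mem_nhds h2, h1, h2, h3, h4, fun m hm => absurd hm (by omega)⟩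
    | succ n ih =>
      have ht : V (n+1) ∩ W n ∈ 𝓝 (1:G) := Filter.inter_mem (hV (n+1)) ih.1
      obtain ⟨h1, h2, h3, h4⟩ := hc (V (n+1) ∩ W n) ht
      refine ⟨h1.mem_nhds h2, h1, h2, h3, fun x hx => (h4 hx).1, fun m hm => ?_⟩
      have hmn : m = n := by omega
      subst hmn
      exact fun x hx => (h4 hx).2
  refine ⟨W, fun n => (key n).2.1, fun n => (key n).2.2.1, fun n x hx => ?_,
    fun n => (key n).2.2.2.1, fun n => (key (n+1)).2.2.2.2.2 n rfl⟩
  have : x * 1 ∈ W n * W n := Set.mul_mem_mul hx (key n).2.2.1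
  rw [mul_one] at this
  exact (key n).2.2.2.2.1 this

lemma core (V : ℕ → Set G) (hV : ∀ n, V n ∈ 𝓝 (1 : G)) :
    ∃ N : Subgroup G, IsClosed (N : Set G) ∧ (N : Set G) ⊆ (⋂ n, V n) ∧
      psiAt (G ⧸ N) (QuotientGroup.mk 1) ≤ ℵ₀ := by
  obtain ⟨W, hWo, hW1, hWV, hWs, hWsq⟩ := exists_W V hV
  have hsub : ∀ n, W (n+1) ⊆ W n := by
    intro n x hx
    have : x * 1 ∈ W (n+1) * W (n+1) := Set.mul_mem_mul hx (hW1 (n+1))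
    rw [mul_one] at this
    exact hWsq n this
  let N : Subgroup G :=
  { carrier := ⋂ n, W n
    one_mem' := Set.mem_iInter.2 hW1
    mul_mem' := by
      intro a b ha hb
      simp only [Set.mem_iInter] at *
      exact fun n => hWsq n (Set.mul_mem_mul (ha (n+1)) (hb (n+1)))
    inv_mem' := by
      intro a ha
      simp only [Set.mem_iInter] at *
      intro n
      rw [← hWs n, Set.mem_inv, inv_inv]
      exact ha n }
  have hNmem : ∀ g : G, g ∈ N ↔ ∀ n, g ∈ W n := by
    intro g
    show g ∈ ⋂ n, W n ↔ _
    exact Set.mem_iInter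
  have hNc : IsClosed (N : Set G) := by
    have hcl : closure ((⋂ n, W n : Set G)) ⊆ ⋂ n, W n := by
      intro x hx
      rw [Set.mem_iInter]
      intro n
      rw [mem_closure_iff] at hx
      obtain ⟨y, hy1, hy2⟩ := hx (x • W (n+1)) ((hWo (n+1)).smul x)
        (by simpa using Set.smul_mem_smul_set (a := x) (hW1 (n+1)))
      obtain ⟨w, hw, hxw⟩ := hy1
      have hyW : y ∈ W (n+1) := Set.mem_iInter.1 hy2 (n+1)
      have hwi : w⁻¹ ∈ W (n+1) := by rw [← hWs (n+1), Set.mem_inv, inv_inv]; exact hw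
      have : y * w⁻¹ ∈ W (n+1) * W (n+1) := Set.mul_mem_mul hyW hwi
      have hx' : x = y * w⁻¹ := by
        rw [← hxw]; simp [smul_eq_mul, mul_assoc]
      rw [hx']
      exact hWsq n this
    exact isClosed_of_closure_subset hcl
  refine ⟨N, hNc, ?_, ?_⟩
  · intro g hg
    rw [Set.mem_iInter]
    exact fun n => hWV n ((hNmem g).1 hg n)
  · set S : Set (Set (G ⧸ N)) := Set.range (fun n => QuotientGroup.mk '' W n) with hS
    have hS1 : ∀ U ∈ S, IsOpen U ∧ (QuotientGroup.mk 1 : G ⧸ N) ∈ U := by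
      rintro U ⟨n, rfl⟩
      exact ⟨QuotientGroup.isOpenMap_coe _ (hWo n), ⟨1, hW1 n, rfl⟩⟩
    have hS2 : ⋂₀ S = {(QuotientGroup.mk 1 : G ⧸ N)} := by
      apply Set.Subset.antisymm
      · intro x hx
        obtain ⟨g, rfl⟩ := QuotientGroup.mk_surjective x
        have hg : g ∈ N := by
          rw [hNmem]
          intro n
          obtain ⟨w, hw, hwg⟩ := hx _ ⟨n + 1, rfl⟩
          have : w⁻¹ * g ∈ N := QuotientGroup.eq.1 hwg
          have h2 : w⁻¹ * g ∈ W (n+1) := (hNmem _).1 this (n+1)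
          have h3 : w * (w⁻¹ * g) ∈ W (n+1) * W (n+1) := Set.mul_mem_mul hw h2
          rw [mul_inv_cancel_left] at h3
          exact hWsq n h3
        rw [Set.mem_singleton_iff, mk_eq_mk_one_iff]
        exact hg
      · rintro x hx
        rw [Set.mem_singleton_iff] at hx
        subst hx
        exact fun U hU => (hS1 U hU).2
    have hmem : psiAt (G ⧸ N) (QuotientGroup.mk 1) ≤ #S := by
      apply csInf_le'
      exact ⟨S, hS1, hS2, rfl⟩
    refine hmem.trans ?_
    have : Countable ↥S := (Set.countable_range _).to_subtype
    exact Cardinal.mk_le_aleph0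

end Aux
section Aux2

variable {G : Type u} [TopologicalSpace G] [Group G] [IsTopologicalGroup G]

lemma singleton_closed (N : Subgroup G) (hN : IsClosed (N : Set G)) (g : G) :
    IsClosed ({(QuotientGroup.mk g : G ⧸ N)} : Set (G ⧸ N)) := by
  apply (QuotientGroup.isQuotientMap_mk N).isClosed_preimage.mp
  have : (QuotientGroup.mk : G → G ⧸ N) ⁻¹' {QuotientGroup.mk g} = g • (N : Set G) := by
    ext h
    simp only [Set.mem_preimage, Set.mem_singleton_iff]
    rw [QuotientGroup.eq, Set.mem_smul_set_iff_inv_smul_mem, smul_eq_mul, SetLike.mem_coe]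
    constructor
    · intro hh
      have := inv_mem hh
      simpa [mul_inv_rev] using this
    · intro hh
      have := inv_mem hh
      simpa [mul_inv_rev] using this
  rw [this]
  exact hN.smul g

lemma sInter_open_nhds (N : Subgroup G) (hN : IsClosed (N : Set G)) :
    ⋂₀ {U : Set (G ⧸ N) | IsOpen U ∧ (QuotientGroup.mk 1 : G ⧸ N) ∈ U} =
      {(QuotientGroup.mk 1 : G ⧸ N)} := by
  apply Set.Subset.antisymm
  · intro x hx
    rw [Set.mem_singleton_iff]
    by_contra hne
    obtain ⟨g, rfl⟩ := QuotientGroup.mk_surjective x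
    have hU : IsOpen (({(QuotientGroup.mk g : G ⧸ N)} : Set (G ⧸ N))ᶜ) :=
      (singleton_closed N hN g).isOpen_compl
    have h1 : (QuotientGroup.mk 1 : G ⧸ N) ∈ (({(QuotientGroup.mk g : G ⧸ N)} : Set (G ⧸ N))ᶜ) := by
      simp only [Set.mem_compl_iff, Set.mem_singleton_iff]
      exact fun h => hne h.symm
    exact hx _ ⟨hU, h1⟩ rfl
  · rintro x hx
    rw [Set.mem_singleton_iff] at hx
    subst hx
    exact fun U hU => hU.2

lemma psi_extract (N : Subgroup G) (hN : IsClosed (N : Set G)) {c : Cardinal.{u}}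
    (h : psiAt (G ⧸ N) (QuotientGroup.mk 1) ≤ c) :
    ∃ S : Set (Set (G ⧸ N)), (∀ U ∈ S, IsOpen U ∧ (QuotientGroup.mk 1 : G ⧸ N) ∈ U) ∧
      ⋂₀ S = {(QuotientGroup.mk 1 : G ⧸ N)} ∧ #S ≤ c := by
  have hT : {c | ∃ S : Set (Set (G ⧸ N)),
      (∀ U ∈ S, IsOpen U ∧ (QuotientGroup.mk 1 : G ⧸ N) ∈ U) ∧
      ⋂₀ S = {(QuotientGroup.mk 1 : G ⧸ N)} ∧ #S = c}.Nonempty :=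
    ⟨_, {U | IsOpen U ∧ (QuotientGroup.mk 1 : G ⧸ N) ∈ U}, fun U hU => hU,
      sInter_open_nhds N hN, rfl⟩
  obtain ⟨S, h1, h2, h3⟩ := csInf_mem hT
  refine ⟨S, h1, h2, ?_⟩
  rw [h3]
  exact h

lemma psi_pullback (N : Subgroup G) (hN : IsClosed (N : Set G)) {c : Cardinal.{u}}
    (h : psiAt (G ⧸ N) (QuotientGroup.mk 1) ≤ c) :
    ∃ (ι : Type u) (O : ι → Set G), #ι ≤ c ∧ (∀ i, IsOpen (O i)) ∧ (∀ i, (1:G) ∈ O i) ∧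
      (∀ i g m, g ∈ O i → m ∈ N → g * m ∈ O i) ∧ (⋂ i, O i) = (N : Set G) := by
  obtain ⟨S, h1, h2, h3⟩ := psi_extract N hN h
  refine ⟨↥S, fun s => QuotientGroup.mk ⁻¹' s.1, h3, ?_, ?_, ?_, ?_⟩
  · exact fun s => (h1 s s.2).1.preimage QuotientGroup.continuous_mk
  · exact fun s => (h1 s s.2).2
  · intro s g m hg hm
    show QuotientGroup.mk (g * m) ∈ s.1
    have : (QuotientGroup.mk (g * m) : G ⧸ N) = QuotientGroup.mk g := by
      rw [QuotientGroup.eq]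
      simpa [mul_inv_rev, mul_assoc] using inv_mem hm
    rw [this]
    exact hg
  · rw [show (⋂ (s : ↥S), QuotientGroup.mk ⁻¹' (s : Set (G ⧸ N))) =
        QuotientGroup.mk ⁻¹' (⋂₀ S) by rw [Set.sInter_eq_iInter, Set.preimage_iInter], h2]
    ext g
    simp only [Set.mem_preimage, Set.mem_singleton_iff, SetLike.mem_coe]
    exact mk_eq_mk_one_iff N g

lemma psi_pullback_nat (N : Subgroup G) (hN : IsClosed (N : Set G))
    (h : psiAt (G ⧸ N) (QuotientGroup.mk 1) ≤ ℵ₀) :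
    ∃ O : ℕ → Set G, (∀ n, IsOpen (O n)) ∧ (∀ n, (1:G) ∈ O n) ∧
      (∀ n g m, g ∈ O n → m ∈ N → g * m ∈ O n) ∧ (⋂ n, O n) = (N : Set G) := by
  obtain ⟨ι, O, hcard, ho, h1, hsat, hint⟩ := psi_pullback N hN h
  have hcnt : Countable ι := Cardinal.mk_le_aleph0_iff.1 hcard
  by_cases hne : Nonempty ι
  · obtain ⟨f, hf⟩ := exists_surjective_nat ι
    exact ⟨fun n => O (f n), fun n => ho (f n), fun n => h1 (f n),
      fun n => hsat (f n), by rw [hf.iInter_comp]; exact hint⟩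
  · haveI : IsEmpty ι := not_nonempty_iff.1 hne
    refine ⟨fun _ => Set.univ, fun _ => isOpen_univ, fun _ => trivial,
      fun _ _ _ _ _ => trivial, ?_⟩
    rw [Set.iInter_univ, ← hint, Set.iInter_of_empty]

end Aux2

theorem statement_0 (τ : Cardinal.{u}) (hτ : ℵ₀ < τ) (G : Type u) [TopologicalSpace G] [Group G]
    [IsTopologicalGroup G] [T2Space G] :
    IsPseudoTauFine τ G ↔
      ∀ M : Subgroup G, IsClosed (M : Set G) →
        psiAt (G ⧸ M) (QuotientGroup.mk 1) ≤ τ →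
          ∃ N : Subgroup G, IsClosed (N : Set G) ∧ N ≤ M ∧
            psiAt (G ⧸ N) (QuotientGroup.mk 1) ≤ ℵ₀ := by
  constructor
  · intro hfine M hMc hMψ
    obtain ⟨ι, O, hcard, ho, h1, hsat, hint⟩ := psi_pullback M hMc hMψ
    obtain ⟨V, hV, hVsub⟩ := hfine ι O hcard (fun i => (ho i).mem_nhds (h1 i))
    obtain ⟨N, hNc, hNsub, hNψ⟩ := core V hV
    refine ⟨N, hNc, fun g hg => ?_, hNψ⟩
    have : g ∈ (M : Set G) := hint ▸ hVsub (hNsub hg)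
    exact this
  · intro hyp ι U hι hU
    have hstep : ∀ i, ∃ N : Subgroup G, IsClosed (N : Set G) ∧ (N : Set G) ⊆ U i ∧
        psiAt (G ⧸ N) (QuotientGroup.mk 1) ≤ ℵ₀ := by
      intro i
      obtain ⟨N, h1, h2, h3⟩ := core (fun _ : ℕ => U i) (fun _ => hU i)
      exact ⟨N, h1, fun g hg => by simpa using Set.mem_iInter.1 (h2 hg) 0, h3⟩
    choose N hNc hNU hNψ using hstep
    have hpull : ∀ i, ∃ O : ℕ → Set G, (∀ n, IsOpen (O n)) ∧ (∀ n, (1:G) ∈ O n) ∧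
        (∀ n g m, g ∈ O n → m ∈ N i → g * m ∈ O n) ∧ (⋂ n, O n) = ((N i : Set G)) :=
      fun i => psi_pullback_nat (N i) (hNc i) (hNψ i)
    choose O hOo hO1 hOsat hOint using hpull
    set M : Subgroup G := ⨅ i, N i with hMdef
    have hMcoe : (M : Set G) = ⋂ i, (N i : Set G) := by
      rw [hMdef, Subgroup.coe_iInf]
    have hMc : IsClosed (M : Set G) := by
      rw [hMcoe]; exact isClosed_iInter fun i => hNc i
    have hMN : ∀ i, (M : Set G) ⊆ (N i : Set G) := by
      intro i; rw [hMcoe]; exact Set.iInter_subset _ i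
    have hMψ : psiAt (G ⧸ M) (QuotientGroup.mk 1) ≤ τ := by
      set S : Set (Set (G ⧸ M)) :=
        Set.range (fun p : ι × ℕ => QuotientGroup.mk '' O p.1 p.2) with hS
      have hS1 : ∀ Uu ∈ S, IsOpen Uu ∧ (QuotientGroup.mk 1 : G ⧸ M) ∈ Uu := by
        rintro Uu ⟨p, rfl⟩
        exact ⟨QuotientGroup.isOpenMap_coe _ (hOo p.1 p.2), ⟨1, hO1 p.1 p.2, rfl⟩⟩
      have hS2 : ⋂₀ S = {(QuotientGroup.mk 1 : G ⧸ M)} := by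
        apply Set.Subset.antisymm
        · intro x hx
          obtain ⟨g, rfl⟩ := QuotientGroup.mk_surjective x
          have hg : ∀ i, g ∈ (N i : Set G) := by
            intro i
            rw [← hOint i, Set.mem_iInter]
            intro n
            obtain ⟨o, ho', hog⟩ := hx _ ⟨(i, n), rfl⟩
            have hm : o⁻¹ * g ∈ M := QuotientGroup.eq.1 hog
            have hm' : o⁻¹ * g ∈ N i := hMN i hm
            have := hOsat i n o (o⁻¹ * g) ho' hm'
            rwa [mul_inv_cancel_left] at this
          have hgM : g ∈ M := by
            rw [hMdef, Subgroup.mem_iInf]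
            exact fun i => hg i
          rw [Set.mem_singleton_iff, mk_eq_mk_one_iff]
          exact hgM
        · rintro x hx
          rw [Set.mem_singleton_iff] at hx
          subst hx
          exact fun Uu hUu => (hS1 Uu hUu).2
      have hle : psiAt (G ⧸ M) (QuotientGroup.mk 1) ≤ #S :=
        csInf_le' ⟨S, hS1, hS2, rfl⟩
      refine hle.trans ?_
      calc #S ≤ #(ι × ℕ) := Cardinal.mk_range_le
        _ = #ι * ℵ₀ := by simp
        _ ≤ τ * τ := mul_le_mul' hι hτ.le
        _ = τ := Cardinal.mul_eq_self hτ.le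
    obtain ⟨N', hN'c, hN'le, hN'ψ⟩ := hyp M hMc hMψ
    obtain ⟨O', hO'o, hO'1, _, hO'int⟩ := psi_pullback_nat N' hN'c hN'ψ
    refine ⟨O', fun n => (hO'o n).mem_nhds (hO'1 n), ?_⟩
    rw [hO'int]
    intro g hg
    rw [Set.mem_iInter]
    intro i
    exact hNU i (hMN i (hN'le hg))
end

section
/- Every pseudocompact topological group G with countable pseudocharacter (ψ(G) ≤ ω) is metrizable and compact. -/
open Cardinal Topology Pointwise

universe u

section Aux
open Filter Set Pointwise

section Chain
variable {G : Type*} [TopologicalSpace G] [Group G] [IsTopologicalGroup G]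

theorem symm_chain {W : Set G} (hW : W ∈ 𝓝 (1:G)) :
    ∃ V : ℕ → Set G, (∀ n, V n ∈ 𝓝 (1:G)) ∧ (∀ n, (V n)⁻¹ = V n) ∧
      (∀ n, V (n+1) * V (n+1) ⊆ V n) ∧ (∀ n, V (n+1) ⊆ V n) ∧ V 0 ⊆ W := by
  have step : ∀ A : Set G, A ∈ 𝓝 (1:G) → ∃ B : Set G, B ∈ 𝓝 (1:G) ∧ B⁻¹ = B ∧ B * B ⊆ A := by
    intro A hA
    obtain ⟨U, hU, hmul⟩ := exists_nhds_one_split hA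
    refine ⟨U ∩ U⁻¹, Filter.inter_mem hU (inv_mem_nhds_one (G := G) hU), by
      simp [Set.inter_inv, Set.inter_comm], ?_⟩
    rintro z ⟨a, ⟨haU, _⟩, b, ⟨hbU, _⟩, rfl⟩
    exact hmul a haU b hbU
  choose! B hBmem hBsymm hBmul using step
  set V : ℕ → Set G := fun n => Nat.rec (B W) (fun _ A => B A) n with hVdef
  have hV0 : V 0 = B W := rfl
  have hVs : ∀ n, V (n+1) = B (V n) := fun n => rfl
  have hmem : ∀ n, V n ∈ 𝓝 (1:G) := by
    intro n
    induction n with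
    | zero => rw [hV0]; exact hBmem W hW
    | succ m ih => rw [hVs]; exact hBmem _ ih
  have hone : ∀ n, (1:G) ∈ V n := fun n => mem_of_mem_nhds (hmem n)
  have hself : ∀ n, V n ⊆ V n * V n := fun n x hx => ⟨x, hx, 1, hone n, mul_one x⟩
  have hmul2 : ∀ n, V (n+1) * V (n+1) ⊆ V n := by
    intro n; rw [hVs]; exact hBmul _ (hmem n)
  refine ⟨V, hmem, ?_, hmul2, fun n => (hself (n+1)).trans (hmul2 n), ?_⟩
  · intro n
    cases n with
    | zero => rw [hV0]; exact hBsymm W hW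
    | succ m => rw [hVs]; exact hBsymm _ (hmem m)
  · rw [hV0]
    exact (by rw [← hV0]; exact hself 0 : B W ⊆ B W * B W).trans (hBmul W hW)
end Chain

section Bump
theorem metr_bump' {X : Type*} [TopologicalSpace X] [TopologicalSpace.PseudoMetrizableSpace X]
    {x : X} {O : Set X} (hO : O ∈ 𝓝 x) :
    ∃ f : X → ℝ, Continuous f ∧ f x = 1 ∧ (∀ y, y ∉ O → f y = 0) ∧ ∀ y, 0 ≤ f y ∧ f y ≤ 1 := by
  letI := TopologicalSpace.pseudoMetrizableSpacePseudoMetric X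
  obtain ⟨ε, hε, hb⟩ := Metric.mem_nhds_iff.1 hO
  refine ⟨fun y => max 0 (1 - dist x y / ε), ?_, by simp, ?_, ?_⟩
  · exact continuous_const.max
      (continuous_const.sub ((continuous_const.dist continuous_id).div_const ε))
  · intro y hy
    have hd : ε ≤ dist x y := by
      by_contra h
      exact hy (hb (by simpa [Metric.mem_ball, dist_comm] using not_le.1 h))
    have h1 : (1:ℝ) ≤ dist x y / ε := (one_le_div hε).2 hd
    have : 1 - dist x y / ε ≤ 0 := by linarith
    simp [max_eq_left this]
  · intro y
    refine ⟨le_max_left _ _, max_le (by norm_num) ?_⟩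
    have h1 : 0 ≤ dist x y / ε := div_nonneg dist_nonneg hε.le
    linarith

theorem pull_bump {X Y : Type*} [TopologicalSpace X] [TopologicalSpace Y]
    [TopologicalSpace.PseudoMetrizableSpace Y] {φ : X → Y} (hφ : Continuous φ)
    {x : X} {O : Set Y} (hO : O ∈ 𝓝 (φ x)) :
    ∃ f : X → ℝ, Continuous f ∧ f x = 1 ∧ (∀ y, φ y ∉ O → f y = 0) ∧ ∀ y, 0 ≤ f y ∧ f y ≤ 1 := by
  obtain ⟨g, hgc, hgx, hg0, hgb⟩ := metr_bump' hO
  exact ⟨g ∘ φ, hgc.comp hφ, hgx, fun y hy => hg0 _ hy, fun y => hgb _⟩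
end Bump

section GBump
variable {G : Type u} [t : TopologicalSpace G] [Group G] [IsTopologicalGroup G]

theorem group_bump {x : G} {O : Set G} (hO : O ∈ 𝓝 x) :
    ∃ f : G → ℝ, Continuous f ∧ f x = 1 ∧ (∀ y, y ∉ O → f y = 0) ∧ ∀ y, 0 ≤ f y ∧ f y ≤ 1 := by
  have hW : (fun y => x * y) ⁻¹' O ∈ 𝓝 (1:G) :=
    (continuous_const.mul continuous_id).continuousAt.preimage_mem_nhds (by simpa using hO)
  obtain ⟨V, hVmem, hVsymm, hVmul, hVanti, hV0⟩ := symm_chain hW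
  have hVmono : ∀ m n, m ≤ n → V n ⊆ V m := fun m n h => antitone_nat_of_succ_le hVanti h
  have hEmono : ∀ m n, m ≤ n →
      ({p : G × G | p.1⁻¹ * p.2 ∈ V n}) ⊆ {p : G × G | p.1⁻¹ * p.2 ∈ V m} :=
    fun m n h p hp => hVmono m n h hp
  have hdir : Directed (· ≥ ·) (fun n => {p : G × G | p.1⁻¹ * p.2 ∈ V n}) := fun m n =>
    ⟨max m n, hEmono m _ (le_max_left _ _), hEmono n _ (le_max_right _ _)⟩
  have hFb : (⨅ n, Filter.principal {p : G × G | p.1⁻¹ * p.2 ∈ V n}).HasBasis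
      (fun _ : ℕ => True) (fun n => {p : G × G | p.1⁻¹ * p.2 ∈ V n}) :=
    Filter.hasBasis_iInf_principal hdir
  have hEF : ∀ n, {p : G × G | p.1⁻¹ * p.2 ∈ V n} ∈
      (⨅ n, Filter.principal {p : G × G | p.1⁻¹ * p.2 ∈ V n}) :=
    fun n => Filter.mem_iInf_of_mem n (Filter.mem_principal_self _)
  have hone : ∀ n, (1:G) ∈ V n := fun n => mem_of_mem_nhds (hVmem n)
  let core : UniformSpace.Core G :=
    { uniformity := ⨅ n, Filter.principal {p : G × G | p.1⁻¹ * p.2 ∈ V n}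
      refl := by
        refine le_iInf fun n => Filter.le_principal_iff.2 (Filter.mem_principal.2 ?_)
        rintro ⟨a, b⟩ (rfl : a = b)
        show a⁻¹ * a ∈ V n
        simpa using hone n
      symm := by
        refine le_iInf fun n => ?_
        rw [Filter.le_principal_iff, Filter.mem_map]
        have heq : Prod.swap ⁻¹' {p : G × G | p.1⁻¹ * p.2 ∈ V n}
            = {p : G × G | p.1⁻¹ * p.2 ∈ V n} := by
          ext ⟨a, b⟩
          constructor
          · intro h
            have h2 : (b⁻¹ * a)⁻¹ ∈ (V n)⁻¹ := Set.inv_mem_inv.2 h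
            rw [hVsymm] at h2
            simpa [mul_inv_rev] using h2
          · intro h
            have h2 : (a⁻¹ * b)⁻¹ ∈ (V n)⁻¹ := Set.inv_mem_inv.2 h
            rw [hVsymm] at h2
            simpa [mul_inv_rev] using h2
        rw [heq]
        exact hEF n
      comp := by
        refine le_iInf fun n => Filter.le_principal_iff.2 ?_
        refine Filter.mem_of_superset (Filter.mem_lift' (hEF (n+1))) ?_
        rintro ⟨a, c⟩ ⟨b, hab, hbc⟩
        have h3 : (a⁻¹ * b) * (b⁻¹ * c) ∈ V (n+1) * V (n+1) := Set.mul_mem_mul hab hbc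
        have h2 := hVmul n h3
        show a⁻¹ * c ∈ V n
        simpa [mul_assoc] using h2 }
  let us : UniformSpace G := .ofCore core
  have hcg : @Filter.IsCountablyGenerated _ (@uniformity G us) := hFb.isCountablyGenerated
  have hnb : ∀ z : G, (@nhds G us.toTopologicalSpace z).HasBasis (fun _ : ℕ => True)
      (fun n => {y | z⁻¹ * y ∈ V n}) := by
    intro z
    letI := us
    have h : (@uniformity G us).HasBasis (fun _ : ℕ => True)
        (fun n => {p : G × G | p.1⁻¹ * p.2 ∈ V n}) := hFb
    exact nhds_basis_uniformity' h
  have hle : t ≤ us.toTopologicalSpace := by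
    refine le_of_nhds_le_nhds fun z => ?_
    refine ((hnb z).ge_iff).2 fun n _ => ?_
    exact (continuous_const.mul continuous_id).continuousAt.preimage_mem_nhds
      (by simpa using hVmem n)
  have hcont_id : Continuous[t, us.toTopologicalSpace] id := continuous_id_iff_le.2 hle
  haveI pmz : @TopologicalSpace.PseudoMetrizableSpace G us.toTopologicalSpace :=
    @UniformSpace.pseudoMetrizableSpace G us hcg
  have hV0nb : V 0 ∈ @nhds G us.toTopologicalSpace 1 :=
    (hnb 1).mem_iff.2 ⟨0, trivial, fun y hy => by simpa using hy⟩
  obtain ⟨f, hfc, hfx, hf0, hfb⟩ :=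
    @pull_bump G G t us.toTopologicalSpace pmz id hcont_id 1 (V 0) hV0nb
  refine ⟨fun y => f (x⁻¹ * y), hfc.comp (continuous_const.mul continuous_id),
    by simpa using hfx, ?_, fun y => hfb _⟩
  intro y hy
  apply hf0
  intro hmem
  exact hy (by simpa using hV0 hmem)
end GBump

theorem feebly {X : Type u} [TopologicalSpace X] (hP : Pseudocompact X)
    (bump : ∀ (x : X) (O : Set X), O ∈ 𝓝 x →
      ∃ f : X → ℝ, Continuous f ∧ f x = 1 ∧ (∀ y, y ∉ O → f y = 0) ∧ ∀ y, 0 ≤ f y ∧ f y ≤ 1)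
    (O : ℕ → Set X) (hO : ∀ n, IsOpen (O n)) (hne : ∀ n, (O n).Nonempty) :
    ∃ p : X, ∀ W ∈ 𝓝 p, {n | (W ∩ O n).Nonempty}.Infinite := by
  by_contra hcon
  push_neg at hcon
  choose Wp hWp hWfin using hcon
  replace hWfin : ∀ p, {n | (Wp p ∩ O n).Nonempty}.Finite := fun p => hWfin p
  choose xs hxs using hne
  choose f hfc hfx hf0 hfb using fun n => bump (xs n) (O n) ((hO n).mem_nhds (hxs n))
  have hfnz : ∀ y n, f n y ≠ 0 → y ∈ O n := fun y n h => by
    by_contra hy; exact h (hf0 n y hy)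
  have hsupfin : ∀ y : X, {n : ℕ | (n:ℝ) * f n y ≠ 0}.Finite := by
    intro y
    refine (hWfin y).subset ?_
    intro n hn
    have hne0 : f n y ≠ 0 := fun h0 => hn (by simp [h0])
    exact ⟨y, mem_of_mem_nhds (hWp y), hfnz y n hne0⟩
  have hsum : ∀ y, Summable (fun n : ℕ => (n:ℝ) * f n y) := fun y =>
    summable_of_ne_finset_zero (s := (hsupfin y).toFinset) (fun n hn => by
      by_contra h; exact hn ((hsupfin y).mem_toFinset.2 h))
  set g : X → ℝ := fun y => ∑' n : ℕ, (n:ℝ) * f n y with hg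
  have hloc : ∀ p, ∀ z ∈ Wp p, g z = ∑ n ∈ (hWfin p).toFinset, (n:ℝ) * f n z := by
    intro p z hz
    refine tsum_eq_sum ?_
    intro n hn
    have hzn : z ∉ O n := fun hzO => hn ((hWfin p).mem_toFinset.2 ⟨z, hz, hzO⟩)
    simp [hf0 n z hzn]
  have hgc : Continuous g := by
    rw [continuous_iff_continuousAt]
    intro p
    have hev : (fun z => ∑ n ∈ (hWfin p).toFinset, (n:ℝ) * f n z) =ᶠ[𝓝 p] g :=
      Filter.eventually_of_mem (hWp p) (fun z hz => (hloc p z hz).symm)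
    have hc : ContinuousAt (fun z => ∑ n ∈ (hWfin p).toFinset, (n:ℝ) * f n z) p :=
      (continuous_finset_sum _ (fun n _ => continuous_const.mul (hfc n))).continuousAt
    exact hc.congr hev
  obtain ⟨C, hC⟩ := hP g hgc
  set N : ℕ := ⌈C⌉₊ + 1 with hN
  have h1 : (N:ℝ) * f N (xs N) = N := by rw [hfx]; ring
  have h2 : (N:ℝ) ≤ g (xs N) := by
    have hle := Summable.le_tsum (hsum (xs N)) N
      (fun m _ => mul_nonneg (Nat.cast_nonneg m) (hfb m (xs N)).1)
    rw [h1] at hle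
    exact hle
  have h3 : (N:ℝ) ≤ C := le_trans h2 (le_trans (le_abs_self _) (hC (xs N)))
  have h4 : C < N := by
    have hceil : C ≤ (⌈C⌉₊ : ℝ) := Nat.le_ceil C
    have : ((⌈C⌉₊ : ℕ) : ℝ) < N := by
      rw [hN]; push_cast; linarith
    linarith
  linarith

end Aux

theorem statement_1 (G : Type u) [TopologicalSpace G] [Group G] [IsTopologicalGroup G] [T2Space G]
    (h1 : Pseudocompact G) (h2 : psi G ≤ ℵ₀) :
    TopologicalSpace.MetrizableSpace G ∧ CompactSpace G := by
  classical
  -- Step 0: extract a countable family of open neighbourhoods of 1 with intersection {1}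
  have hSne : {c : Cardinal.{u} | ∃ S : Set (Set G),
      (∀ U ∈ S, IsOpen U ∧ (1:G) ∈ U) ∧ ⋂₀ S = {(1:G)} ∧ #S = c}.Nonempty := by
    refine ⟨_, {U : Set G | IsOpen U ∧ (1:G) ∈ U}, fun U hU => hU, ?_, rfl⟩
    ext x
    simp only [Set.mem_sInter, Set.mem_setOf_eq, Set.mem_singleton_iff]
    constructor
    · intro hx
      by_contra hne
      exact (hx {x}ᶜ ⟨isOpen_compl_singleton,
        by simp [Set.mem_compl_iff, Ne.symm hne]⟩) rfl
    · rintro rfl U ⟨_, h1U⟩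
      exact h1U
  have hmem : psi G ∈ {c : Cardinal.{u} | ∃ S : Set (Set G),
      (∀ U ∈ S, IsOpen U ∧ (1:G) ∈ U) ∧ ⋂₀ S = {(1:G)} ∧ #S = c} := by
    have := csInf_mem hSne
    exact this
  obtain ⟨S, hSopen, hSint, hScard⟩ := hmem
  have hScount : S.Countable := by
    rw [← Set.countable_coe_iff, ← Cardinal.mk_le_aleph0_iff, hScard]
    exact h2
  obtain ⟨Useq, hUrange⟩ := (hScount.insert Set.univ).exists_eq_range
    ⟨Set.univ, Set.mem_insert _ _⟩
  have hUopen : ∀ n, IsOpen (Useq n) ∧ (1:G) ∈ Useq n := by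
    intro n
    have hmem' : Useq n ∈ insert Set.univ S := by
      rw [hUrange]
      exact Set.mem_range_self n
    rcases Set.mem_insert_iff.1 hmem' with h | h
    · rw [h]
      exact ⟨isOpen_univ, Set.mem_univ _⟩
    · exact hSopen _ h
  have hUint : ⋂ n, Useq n = {(1:G)} := by
    rw [← Set.sInter_range, ← hUrange, Set.sInter_insert, hSint, Set.univ_inter]
  -- bump functions on G
  have bump : ∀ (x : G) (O : Set G), O ∈ 𝓝 x →
      ∃ f : G → ℝ, Continuous f ∧ f x = 1 ∧ (∀ y, y ∉ O → f y = 0) ∧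
        ∀ y, 0 ≤ f y ∧ f y ≤ 1 := fun x O hO => group_bump hO
  -- Step 1: decreasing chain of open neighbourhoods with closures
  have stepc : ∀ A : Set G, A ∈ 𝓝 (1:G) →
      ∃ B : Set G, IsOpen B ∧ (1:G) ∈ B ∧ closure B ⊆ A := by
    intro A hA
    obtain ⟨C, hC, hCc, hCA⟩ := exists_mem_nhds_isClosed_subset hA
    exact ⟨interior C, isOpen_interior, mem_interior_iff_mem_nhds.2 hC,
      (closure_minimal interior_subset hCc).trans hCA⟩
  choose! st hsto hst1 hstc using stepc
  set Wseq : ℕ → Set G := fun n => Nat.rec Set.univ (fun m Bm => st (Bm ∩ Useq m)) n with hWdef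
  have hWs : ∀ n, Wseq (n+1) = st (Wseq n ∩ Useq n) := fun n => rfl
  have hWprop : ∀ n, IsOpen (Wseq n) ∧ (1:G) ∈ Wseq n := by
    intro n
    induction n with
    | zero => exact ⟨isOpen_univ, Set.mem_univ _⟩
    | succ m ih =>
      have hm : Wseq m ∩ Useq m ∈ 𝓝 (1:G) :=
        Filter.inter_mem (ih.1.mem_nhds ih.2) ((hUopen m).1.mem_nhds (hUopen m).2)
      rw [hWs]
      exact ⟨hsto _ hm, hst1 _ hm⟩
  have hWnhds : ∀ n, Wseq n ∩ Useq n ∈ 𝓝 (1:G) := fun n =>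
    Filter.inter_mem ((hWprop n).1.mem_nhds (hWprop n).2)
      ((hUopen n).1.mem_nhds (hUopen n).2)
  have hWcl : ∀ n, closure (Wseq (n+1)) ⊆ Wseq n ∩ Useq n := fun n => by
    rw [hWs]
    exact hstc _ (hWnhds n)
  have hWdec : ∀ n, Wseq (n+1) ⊆ Wseq n := fun n =>
    (subset_closure.trans (hWcl n)).trans Set.inter_subset_left
  have hWmono : ∀ m n, m ≤ n → Wseq n ⊆ Wseq m := fun m n h =>
    antitone_nat_of_succ_le hWdec h
  -- Step 2: {Wseq n} is a neighbourhood basis at 1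
  have hbasis : ∀ A ∈ 𝓝 (1:G), ∃ n, Wseq n ⊆ A := by
    intro A hA
    by_contra hno
    push_neg at hno
    have hBo : IsOpen (st A) := hsto A hA
    have hB1 : (1:G) ∈ st A := hst1 A hA
    have hBA : closure (st A) ⊆ A := hstc A hA
    set Os : ℕ → Set G := fun n => Wseq (n+1) \ closure (st A) with hOdef
    have hOso : ∀ n, IsOpen (Os n) := fun n => (hWprop (n+1)).1.sdiff isClosed_closure
    have hOsne : ∀ n, (Os n).Nonempty := by
      intro n
      obtain ⟨y, hyW, hyA⟩ := Set.not_subset.1 (hno (n+1))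
      exact ⟨y, hyW, fun hyB => hyA (hBA hyB)⟩
    obtain ⟨p, hp⟩ := feebly h1 bump Os hOso hOsne
    have hpU : ∀ m, p ∈ Useq m := by
      intro m
      refine ((hWcl m) ?_).2
      rw [mem_closure_iff_nhds]
      intro t ht
      obtain ⟨n, hnmem, hnlt⟩ := (hp t ht).exists_gt m
      obtain ⟨z, hzt, hzO⟩ := hnmem
      exact ⟨z, hzt, hWmono (m+1) (n+1) (by omega) hzO.1⟩
    have hp1 : p = 1 := by
      have hmem2 : p ∈ ⋂ n, Useq n := Set.mem_iInter.2 hpU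
      rwa [hUint, Set.mem_singleton_iff] at hmem2
    have hBnp : st A ∈ 𝓝 p := hp1 ▸ hBo.mem_nhds hB1
    have hempty : {n : ℕ | (st A ∩ Os n).Nonempty} = ∅ := by
      ext n
      simp only [Set.mem_setOf_eq, Set.mem_empty_iff_false, iff_false]
      rintro ⟨z, hzB, hzO⟩
      exact hzO.2 (subset_closure hzB)
    have hinf := hp (st A) hBnp
    rw [hempty] at hinf
    exact Set.not_infinite.2 Set.finite_empty hinf
  have hb2 : (𝓝 (1:G)).HasBasis (fun _ : ℕ => True) Wseq := by
    constructor
    intro A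
    constructor
    · intro hA
      obtain ⟨n, hn⟩ := hbasis A hA
      exact ⟨n, trivial, hn⟩
    · rintro ⟨n, -, hn⟩
      exact Filter.mem_of_superset ((hWprop n).1.mem_nhds (hWprop n).2) hn
  haveI : (𝓝 (1:G)).IsCountablyGenerated := hb2.isCountablyGenerated
  haveI : FirstCountableTopology G := ⟨fun x => by
    rw [← map_mul_left_nhds_one x]
    exact Filter.map.isCountablyGenerated _ _⟩
  -- Step 3: metrizable
  have hmetr : TopologicalSpace.MetrizableSpace G := by
    letI us : UniformSpace G := IsTopologicalGroup.rightUniformSpace G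
    haveI : (uniformity G).IsCountablyGenerated := by
      rw [uniformity_eq_comap_nhds_one' G]
      exact Filter.comap.isCountablyGenerated _ _
    exact UniformSpace.metrizableSpace
  refine ⟨hmetr, ?_⟩
  -- Step 4: compact
  haveI := hmetr
  letI mG : MetricSpace G := TopologicalSpace.metrizableSpaceMetric G
  haveI : SeqCompactSpace G := by
    constructor
    intro u hu
    have hcluster : ∃ p : G, MapClusterPt p Filter.atTop u := by
      by_contra hnc
      push_neg at hnc
      have hnc2 : ∀ p : G, ∃ ε : ℝ, 0 < ε ∧ {n : ℕ | u n ∈ Metric.ball p ε}.Finite := by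
        intro p
        have hmc := hnc p
        rw [mapClusterPt_iff_frequently] at hmc
        push_neg at hmc
        obtain ⟨s, hs, hfreq⟩ := hmc
        obtain ⟨ε, hε, hball⟩ := Metric.mem_nhds_iff.1 hs
        refine ⟨ε, hε, ?_⟩
        have hfin : {n : ℕ | ¬ (u n ∉ s)}.Finite := by
          rw [← Nat.cofinite_eq_atTop] at hfreq
          exact Filter.eventually_cofinite.mp hfreq
        exact hfin.subset (fun n hn => fun hc => hc (hball hn))
      choose εp hεp hfinp using hnc2
      obtain ⟨p, hp⟩ := feebly h1 (fun x O hO => metr_bump' hO)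
        (fun n => Metric.ball (u n) (1/(n+1)))
        (fun n => Metric.isOpen_ball)
        (fun n => ⟨u n, Metric.mem_ball_self (by positivity)⟩)
      have hW := hp (Metric.ball p (εp p / 2))
        (Metric.ball_mem_nhds p (by have := hεp p; linarith))
      have hsubset : {n : ℕ |
            (Metric.ball p (εp p/2) ∩ Metric.ball (u n) (1/(n+1))).Nonempty}
          ⊆ {n : ℕ | εp p/2 ≤ (1:ℝ)/(n+1)} ∪ {n : ℕ | u n ∈ Metric.ball p (εp p)} := by
        rintro n ⟨z, hz1, hz2⟩
        by_cases hc : εp p/2 ≤ (1:ℝ)/(n+1)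
        · exact Or.inl hc
        · right
          push_neg at hc
          simp only [Set.mem_setOf_eq, Metric.mem_ball]
          rw [Metric.mem_ball] at hz1 hz2
          have htr : dist (u n) p ≤ dist (u n) z + dist z p := dist_triangle _ _ _
          have hzz : dist (u n) z = dist z (u n) := dist_comm _ _
          linarith [hz1, hz2]
      have hfin1 : {n : ℕ | εp p/2 ≤ (1:ℝ)/(n+1)}.Finite := by
        refine (Set.finite_le_nat ⌈2/εp p⌉₊).subset ?_
        intro n hn
        simp only [Set.mem_setOf_eq] at hn ⊢
        have hεpos := hεp p
        have hn1 : (0:ℝ) < n + 1 := by positivity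
        have h2 : (n:ℝ) + 1 ≤ 2 / εp p := by
          rw [div_le_div_iff₀ (by linarith) hn1] at hn
          rw [le_div_iff₀ hεpos]
          linarith
        have h3 : (n:ℝ) ≤ 2 / εp p := by linarith
        calc (n:ℕ) ≤ ⌈(n:ℝ)⌉₊ := by simp
        _ ≤ ⌈2/εp p⌉₊ := Nat.ceil_le_ceil h3
      exact Set.not_infinite.2 ((hfin1.union (hfinp p)).subset hsubset) hW
    obtain ⟨p, hp⟩ := hcluster
    obtain ⟨ψ, hψ, hten⟩ := TopologicalSpace.FirstCountableTopology.tendsto_subseq hp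
    exact ⟨p, Set.mem_univ p, ψ, hψ, hten⟩
  exact compactSpace_iff_seqCompactSpace.mpr ‹_›
end

section
/- Let G be a precompact abelian topological group whose pseudocharacter ψ(G) is uncountable. Then either pfi(G) ≤ 𝔠, or pfi(G) equals the least cardinal τ > 𝔠 such that G admits a quotient group (by a closed subgroup) of pseudocharacter exactly τ. -/
open Cardinal Topology Pointwise

universe u

section Aux

variable {G : Type u} [TopologicalSpace G] [Group G] [IsTopologicalGroup G]

/-- Shrinking lemma: inside any neighbourhood of `1` there is an open symmetric set whose
square is contained in it. -/
lemma exists_symm_sq {A : Set G} (hA : A ∈ 𝓝 (1 : G)) :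
    ∃ B : Set G, IsOpen B ∧ (1 : G) ∈ B ∧ B⁻¹ = B ∧ B * B ⊆ A := by
  obtain ⟨V, hVo, hV1, hVmul⟩ := exists_open_nhds_one_mul_subset hA
  refine ⟨V ∩ V⁻¹, hVo.inter hVo.inv, ⟨hV1, by simpa using hV1⟩, ?_, ?_⟩
  · rw [Set.inter_inv, inv_inv, Set.inter_comm]
  · exact (Set.mul_subset_mul Set.inter_subset_left Set.inter_subset_left).trans hVmul

/-- A decreasing sequence of open symmetric sets with squares, inside a given sequence of
neighbourhoods. -/
lemma exists_symSeq (V : ℕ → Set G) (hV : ∀ n, V n ∈ 𝓝 (1 : G)) :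
    ∃ W : ℕ → Set G, (∀ n, IsOpen (W n)) ∧ (∀ n, (1 : G) ∈ W n) ∧ (∀ n, (W n)⁻¹ = W n) ∧
      (∀ n, W n ⊆ V n) ∧ (∀ n, W (n + 1) * W (n + 1) ⊆ W n) := by
  classical
  have hF : ∀ A : Set G, ∃ B : Set G,
      A ∈ 𝓝 (1 : G) → (IsOpen B ∧ (1 : G) ∈ B ∧ B⁻¹ = B ∧ B * B ⊆ A) := by
    intro A
    by_cases hA : A ∈ 𝓝 (1 : G)
    · obtain ⟨B, h1, h2, h3, h4⟩ := exists_symm_sq hA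
      exact ⟨B, fun _ => ⟨h1, h2, h3, h4⟩⟩
    · exact ⟨∅, fun h => absurd h hA⟩
  choose F hFspec using hF
  have hsq_sub : ∀ {A B : Set G}, (1 : G) ∈ B → B * B ⊆ A → B ⊆ A := by
    intro A B h1 hm b hb
    have : b * 1 ∈ B * B := Set.mul_mem_mul hb h1
    simpa using hm this
  set W : ℕ → Set G := fun n => Nat.rec (F (V 0)) (fun n Wn => F (Wn ∩ V (n + 1))) n with hW
  have hWs : ∀ n, W (n + 1) = F (W n ∩ V (n + 1)) := fun n => rfl
  have key : ∀ n, IsOpen (W n) ∧ (1 : G) ∈ W n ∧ (W n)⁻¹ = W n ∧ W n ⊆ V n := by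
    intro n
    induction n with
    | zero =>
      obtain ⟨h1, h2, h3, h4⟩ := hFspec (V 0) (hV 0)
      exact ⟨h1, h2, h3, hsq_sub h2 h4⟩
    | succ n ih =>
      have hnhd : W n ∩ V (n + 1) ∈ 𝓝 (1 : G) :=
        Filter.inter_mem ((ih.1.mem_nhds ih.2.1)) (hV (n + 1))
      obtain ⟨h1, h2, h3, h4⟩ := hFspec _ hnhd
      rw [hWs n]
      exact ⟨h1, h2, h3, ((hsq_sub h2 h4).trans Set.inter_subset_right)⟩
  refine ⟨W, fun n => (key n).1, fun n => (key n).2.1, fun n => (key n).2.2.1,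
    fun n => (key n).2.2.2, fun n => ?_⟩
  have hnhd : W n ∩ V (n + 1) ∈ 𝓝 (1 : G) :=
    Filter.inter_mem (((key n).1).mem_nhds (key n).2.1) (hV (n + 1))
  have h4 := (hFspec _ hnhd).2.2.2
  rw [hWs n]
  exact h4.trans Set.inter_subset_left

/-- In a topological group, the closure of a set is contained in its product with any
symmetric open neighbourhood of the identity. -/
lemma closure_subset_mul' {A B : Set G} (hB : IsOpen B) (h1 : (1 : G) ∈ B)
    (hsymm : B⁻¹ = B) : closure A ⊆ A * B := by
  intro x hx
  have hxB : x ∈ x • B := by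
    rw [Set.mem_smul_set_iff_inv_smul_mem]
    simpa using h1
  obtain ⟨a, haB, haA⟩ := mem_closure_iff.1 hx (x • B) (hB.smul x) hxB
  obtain ⟨b, hbB, hba⟩ := haB
  have hbinv : b⁻¹ ∈ B := by rw [← hsymm]; exact Set.inv_mem_inv.2 hbB
  have : x = a * b⁻¹ := by
    rw [← hba]; simp [smul_eq_mul]
  rw [this]
  exact Set.mul_mem_mul haA hbinv

end Aux

section Main

variable {G : Type u} [TopologicalSpace G] [Group G] [IsTopologicalGroup G]

/-- If a quotient of a precompact group by a closed subgroup has pseudocharacter `τ > 𝔠`,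
then `G` is not pseudo-`τ`-fine. -/
lemma not_fine_of_quotient (hpre : PrecompactGroup G) (N : Subgroup G)
    (hNc : IsClosed (N : Set G))
    (hτ : Cardinal.continuum < psiAt (G ⧸ N) (QuotientGroup.mk 1)) :
    ¬ IsPseudoTauFine (psiAt (G ⧸ N) (QuotientGroup.mk 1)) G := by
  classical
  set Q := G ⧸ N
  set e : Q := QuotientGroup.mk 1 with he
  set 𝒞 : Set Cardinal.{u} :=
    {c | ∃ S : Set (Set Q), (∀ U ∈ S, IsOpen U ∧ e ∈ U) ∧ ⋂₀ S = {e} ∧ #S = c} with h𝒞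
  have hpsi : psiAt Q e = sInf 𝒞 := rfl
  have hne : 𝒞.Nonempty := by
    by_contra h
    rw [Set.not_nonempty_iff_eq_empty] at h
    rw [hpsi, h, Cardinal.sInf_empty] at hτ
    exact absurd hτ (not_lt.2 zero_le)
  obtain ⟨S, hSopen, hSint, hScard⟩ := csInf_mem hne
  intro hfine
  -- apply fineness to the pulled-back family
  obtain ⟨V, hVn, hVsub⟩ := hfine (↥S) (fun W => QuotientGroup.mk ⁻¹' (W : Set Q))
    (le_of_eq (by rw [hScard, hpsi]))
    (fun W => ((hSopen W.1 W.2).1.preimage continuous_quot_mk).mem_nhds (hSopen W.1 W.2).2)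
  have hVsubN : (⋂ n, V n) ⊆ (N : Set G) := by
    intro x hx
    have hmem : QuotientGroup.mk x ∈ ⋂₀ S := by
      intro W hW
      exact Set.mem_iInter.1 (hVsub hx) ⟨W, hW⟩
    rw [hSint] at hmem
    have hxe : (QuotientGroup.mk x : Q) = QuotientGroup.mk 1 := hmem
    have := QuotientGroup.eq.1 hxe
    simpa using (inv_mem_iff (x := x⁻¹)).2 (by simpa using this)
  obtain ⟨W, hWo, hW1, hWsym, hWsub, hWsq⟩ := exists_symSeq V hVn
  have hWnhd : ∀ n, W n ∈ 𝓝 (1 : G) := fun n => (hWo n).mem_nhds (hW1 n)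
  choose Fn hFn using fun n => hpre _ (hWnhd n)
  have hc : ∀ n (x : G), ∃ g, g ∈ Fn n ∧ g⁻¹ * x ∈ W n := by
    intro n x
    have hx := hFn n (Set.mem_univ x)
    simp only [Set.mem_iUnion] at hx
    obtain ⟨g, hg, hmem⟩ := hx
    refine ⟨g, hg, ?_⟩
    rw [Set.mem_smul_set_iff_inv_smul_mem] at hmem
    simpa [smul_eq_mul] using hmem
  choose c hcF hcW using hc
  have hinj : ∀ x y : G, (∀ n, c n x = c n y) → x⁻¹ * y ∈ N := by
    intro x y h
    have hx : ∀ n, x⁻¹ * y ∈ W n := by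
      intro n
      have h1 := hcW (n + 1) x
      have h2 := hcW (n + 1) y
      rw [h (n + 1)] at h1
      have h1' : ((c (n + 1) y)⁻¹ * x)⁻¹ ∈ W (n + 1) := by
        rw [← hWsym (n + 1)]
        exact Set.inv_mem_inv.2 h1
      have := Set.mul_mem_mul h1' h2
      have heq : ((c (n + 1) y)⁻¹ * x)⁻¹ * ((c (n + 1) y)⁻¹ * y) = x⁻¹ * y := by group
      rw [heq] at this
      exact hWsq n this
    exact hVsubN (Set.mem_iInter.2 fun n => hWsub n (hx n))
  -- injection of the quotient into ℕ → ℕ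
  let k : Q → ℕ → ℕ := fun q n => ((Fn n).toList).idxOf (c n (Quotient.out q))
  have hkinj : Function.Injective k := by
    intro q q' h
    have hcc : ∀ n, c n (Quotient.out q) = c n (Quotient.out q') := by
      intro n
      have hn := congrFun h n
      exact (List.idxOf_inj ((Finset.mem_toList).2 (hcF n _))).1 hn
    have hmem := hinj _ _ hcc
    have : (QuotientGroup.mk (Quotient.out q) : Q) = QuotientGroup.mk (Quotient.out q') :=
      QuotientGroup.eq.2 hmem
    rwa [QuotientGroup.out_eq', QuotientGroup.out_eq'] at this
  have hQc : #Q ≤ Cardinal.continuum := by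
    have h1 : #Q ≤ #(ULift.{u} (ℕ → ℕ)) :=
      Cardinal.mk_le_of_injective (f := fun q => (ULift.up (k q) : ULift.{u} (ℕ → ℕ)))
        (fun a b hab => hkinj (congrArg ULift.down hab))
    have h2 : #(ℕ → ℕ) = Cardinal.continuum := by
      rw [← Cardinal.power_def, Cardinal.mk_nat, Cardinal.aleph0_power_aleph0]
    rw [Cardinal.mk_uLift, h2, Cardinal.lift_continuum] at h1
    exact h1
  -- every singleton of Q is closed
  have hT1 : ∀ q : Q, IsClosed ({q} : Set Q) := by
    intro q
    rw [← (QuotientGroup.isQuotientMap_mk N).isClosed_preimage]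
    have hpre' : (QuotientGroup.mk ⁻¹' {q} : Set G) =
        (fun g : G => g⁻¹ * Quotient.out q) ⁻¹' (N : Set G) := by
      ext g
      simp only [Set.mem_preimage, Set.mem_singleton_iff, SetLike.mem_coe]
      constructor
      · intro hg
        have : (QuotientGroup.mk g : Q) = QuotientGroup.mk (Quotient.out q) := by
          rw [hg, QuotientGroup.out_eq']
        exact QuotientGroup.eq.1 this
      · intro hg
        have : (QuotientGroup.mk g : Q) = QuotientGroup.mk (Quotient.out q) :=
          QuotientGroup.eq.2 hg
        rwa [QuotientGroup.out_eq'] at this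
    rw [hpre']
    exact hNc.preimage (continuous_inv.mul continuous_const)
  -- hence the pseudocharacter of Q is at most 𝔠
  have hψQ : psiAt Q e ≤ Cardinal.continuum := by
    set S' : Set (Set Q) := (fun q : Q => ({q}ᶜ : Set Q)) '' {q | q ≠ e} with hS'
    have h1 : ∀ U ∈ S', IsOpen U ∧ e ∈ U := by
      rintro U ⟨q, hq, rfl⟩
      exact ⟨(hT1 q).isOpen_compl, fun h => hq (Set.mem_singleton_iff.1 h).symm⟩
    have h2 : ⋂₀ S' = {e} := by
      ext q
      constructor
      · intro hq
        by_contra hne'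
        have hqe : q ≠ e := fun h => hne' (Set.mem_singleton_iff.2 h)
        have : q ∈ ({q}ᶜ : Set Q) := hq _ ⟨q, hqe, rfl⟩
        exact this rfl
      · intro hq
        rw [Set.mem_singleton_iff] at hq
        subst hq
        intro U hU
        exact (h1 U hU).2
    have hle : psiAt Q e ≤ #S' := csInf_le' ⟨S', h1, h2, rfl⟩
    refine hle.trans (Cardinal.mk_image_le.trans ?_)
    exact (Cardinal.mk_set_le _).trans hQc
  exact absurd (hτ.trans_le hψQ) (lt_irrefl _)

/-- If `G` is not pseudo-`pfi G`-fine with `pfi G > 𝔠`, there is a closed subgroup whose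
quotient has pseudocharacter exactly `pfi G`. -/
lemma exists_quotient_psi_eq_pfi (hc : ¬ pfi G ≤ Cardinal.continuum) :
    ∃ N : Subgroup G, IsClosed (N : Set G) ∧
      psiAt (G ⧸ N) (QuotientGroup.mk 1) = pfi G := by
  classical
  set S₀ : Set Cardinal.{u} := {τ | ¬ IsPseudoTauFine τ G} with hS₀
  have hpfi : pfi G = sInf S₀ := rfl
  have hne : S₀.Nonempty := by
    by_contra h
    rw [Set.not_nonempty_iff_eq_empty] at h
    rw [hpfi, h, Cardinal.sInf_empty] at hc
    exact hc zero_le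
  have hnotfine : ¬ IsPseudoTauFine (pfi G) G := csInf_mem hne
  have haleph : ℵ₀ ≤ pfi G :=
    (Cardinal.aleph0_le_continuum.trans (le_of_not_ge hc))
  rw [IsPseudoTauFine] at hnotfine
  push_neg at hnotfine
  obtain ⟨ι, U, hι, hU, hnoV⟩ := hnotfine
  -- ι is nonempty
  have hιne : Nonempty ι := by
    by_contra h
    have : IsEmpty ι := not_nonempty_iff.1 h
    refine hnoV (fun _ => Set.univ) (fun _ => Filter.univ_mem) ?_
    simp
  -- symmetric sequences inside each `U i`
  have hWs : ∀ i : ι, ∃ W : ℕ → Set G, (∀ n, IsOpen (W n)) ∧ (∀ n, (1 : G) ∈ W n) ∧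
      (∀ n, (W n)⁻¹ = W n) ∧ (∀ n, W n ⊆ U i) ∧ (∀ n, W (n + 1) * W (n + 1) ⊆ W n) :=
    fun i => exists_symSeq (fun _ => U i) (fun _ => hU i)
  choose W hWo hW1 hWsym hWsub hWsq using hWs
  -- the closed subgroups `H i`
  have hmul : ∀ (i : ι) {a b : G}, a ∈ ⋂ n, W i n → b ∈ ⋂ n, W i n → a * b ∈ ⋂ n, W i n := by
    intro i a b ha hb
    refine Set.mem_iInter.2 fun n => hWsq i n
      (Set.mul_mem_mul (Set.mem_iInter.1 ha (n + 1)) (Set.mem_iInter.1 hb (n + 1)))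
  let H : ι → Subgroup G := fun i =>
    { carrier := ⋂ n, W i n
      one_mem' := Set.mem_iInter.2 fun n => hW1 i n
      mul_mem' := fun ha hb => hmul i ha hb
      inv_mem' := by
        intro a ha
        refine Set.mem_iInter.2 fun n => ?_
        rw [← hWsym i n]
        exact Set.inv_mem_inv.2 (Set.mem_iInter.1 ha n) }
  have hHcar : ∀ i, (H i : Set G) = ⋂ n, W i n := fun i => rfl
  have hHclosed : ∀ i, IsClosed (H i : Set G) := by
    intro i
    refine isClosed_of_closure_subset ?_
    intro x hx
    rw [hHcar]
    refine Set.mem_iInter.2 fun n => ?_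
    have h1 : closure (H i : Set G) ⊆ closure (W i (n + 1)) :=
      closure_mono (by rw [hHcar]; exact Set.iInter_subset _ (n + 1))
    have h2 : closure (W i (n + 1)) ⊆ W i (n + 1) * W i (n + 1) :=
      closure_subset_mul' (hWo i (n + 1)) (hW1 i (n + 1)) (hWsym i (n + 1))
    exact hWsq i n (h2 (h1 hx))
  -- their intersection
  set N : Subgroup G := ⨅ i, H i with hN
  have hNcar : (N : Set G) = ⋂ i, (H i : Set G) := by
    rw [hN, Subgroup.coe_iInf]
  have hNc : IsClosed (N : Set G) := by
    rw [hNcar]; exact isClosed_iInter hHclosed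
  have hNsubH : ∀ i, (N : Set G) ⊆ (H i : Set G) := by
    intro i; rw [hNcar]; exact Set.iInter_subset _ i
  have hNsubU : (N : Set G) ⊆ ⋂ i, U i :=
    fun x hx => Set.mem_iInter.2 fun i => hWsub i 0 (Set.mem_iInter.1 ((hNsubH i) hx) 0)
  set Q := G ⧸ N with hQ
  set e : Q := QuotientGroup.mk 1 with he
  set 𝒞 : Set Cardinal.{u} :=
    {c | ∃ S : Set (Set Q), (∀ T ∈ S, IsOpen T ∧ e ∈ T) ∧ ⋂₀ S = {e} ∧ #S = c} with h𝒞
  have hpsiQ : psiAt Q e = sInf 𝒞 := rfl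
  -- the canonical family of open saturated sets
  set P : ι × ℕ → Set Q :=
    (fun p => QuotientGroup.mk '' (W p.1 (p.2 + 2) * (H p.1 : Set G))) with hP
  set S : Set (Set Q) := Set.range P with hSdef
  have hSopen : ∀ T ∈ S, IsOpen T ∧ e ∈ T := by
    rintro T ⟨⟨i, n⟩, rfl⟩
    constructor
    · exact QuotientGroup.isOpenMap_coe _ ((hWo i (n + 2)).mul_right)
    · refine ⟨1, ?_, rfl⟩
      have : (1 : G) * 1 ∈ W i (n + 2) * (H i : Set G) :=
        Set.mul_mem_mul (hW1 i (n + 2)) (H i).one_mem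
      simpa using this
  have hSint : ⋂₀ S = {e} := by
    apply Set.eq_of_subset_of_subset
    · intro q hq
      set x := Quotient.out q with hx
      have hqx : (QuotientGroup.mk x : Q) = q := QuotientGroup.out_eq' q
      have hxW : ∀ (i : ι) (n : ℕ), x ∈ W i (n + 1) := by
        intro i n
        have hqP : q ∈ P (i, n) := hq _ ⟨(i, n), rfl⟩
        rw [← hqx] at hqP
        obtain ⟨o, hoWH, hoeq⟩ := hqP
        have hoN : o⁻¹ * x ∈ N := QuotientGroup.eq.1 hoeq
        obtain ⟨w, hw, h, hh, hwh⟩ := hoWH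
        have hxeq : x = w * (h * (o⁻¹ * x)) := by
          rw [← hwh]; group
        have : x ∈ W i (n + 2) * (H i : Set G) := by
          rw [hxeq]
          exact Set.mul_mem_mul hw ((H i).mul_mem hh (hNsubH i hoN))
        obtain ⟨w', hw', h', hh', hwh'⟩ := this
        have hh'W : h' ∈ W i (n + 2) := Set.mem_iInter.1 hh' (n + 2)
        rw [← hwh']
        exact hWsq i (n + 1) (Set.mul_mem_mul hw' hh'W)
      have hxN : x ∈ (N : Set G) := by
        rw [hNcar]
        refine Set.mem_iInter.2 fun i => ?_
        rw [hHcar]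
        refine Set.mem_iInter.2 fun n => ?_
        cases n with
        | zero =>
          have h1 : x * 1 ∈ W i 1 * W i 1 := Set.mul_mem_mul (hxW i 0) (hW1 i 1)
          have := hWsq i 0 h1
          simpa using this
        | succ m => exact hxW i m
      have : (QuotientGroup.mk x : Q) = QuotientGroup.mk 1 :=
        QuotientGroup.eq.2 (by simpa using (N.inv_mem hxN))
      rw [← hqx, this]
      exact rfl
    · intro q hq
      rw [Set.mem_singleton_iff] at hq
      subst hq
      intro T hT
      exact (hSopen T hT).2
  have hScard : #S ≤ pfi G := by
    have h1 : #S ≤ #(ι × ℕ) := Cardinal.mk_range_le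
    have h2 : #(ι × ℕ) = #ι * ℵ₀ := by
      simp [Cardinal.mk_prod, Cardinal.mk_nat]
    have h3 : #ι * ℵ₀ ≤ pfi G * pfi G := mul_le_mul' hι haleph
    rw [Cardinal.mul_eq_self haleph] at h3
    exact h1.trans (h2 ▸ h3)
  have hub : psiAt Q e ≤ pfi G := le_trans (csInf_le' ⟨S, hSopen, hSint, rfl⟩) hScard
  refine ⟨N, hNc, ?_⟩
  -- lower bound: psiAt Q e cannot be < pfi G
  by_contra hneq
  have hlt : psiAt Q e < pfi G := lt_of_le_of_ne hub hneq
  have h𝒞ne : 𝒞.Nonempty := ⟨#S, S, hSopen, hSint, rfl⟩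
  obtain ⟨S₁, hS₁open, hS₁int, hS₁card⟩ := csInf_mem h𝒞ne
  have hfine : IsPseudoTauFine (psiAt Q e) G := by
    by_contra hbad
    exact absurd (csInf_le' (show psiAt Q e ∈ S₀ from hbad)) (not_le.2 hlt)
  obtain ⟨V, hVn, hVsub⟩ := hfine (↥S₁) (fun T => QuotientGroup.mk ⁻¹' (T : Set Q))
    (le_of_eq (by rw [hS₁card, hpsiQ]))
    (fun T => ((hS₁open T.1 T.2).1.preimage continuous_quot_mk).mem_nhds (hS₁open T.1 T.2).2)
  refine hnoV V hVn ?_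
  refine Set.Subset.trans ?_ hNsubU
  intro x hx
  have hmem : QuotientGroup.mk x ∈ ⋂₀ S₁ := by
    intro T hT
    exact Set.mem_iInter.1 (hVsub hx) ⟨T, hT⟩
  rw [hS₁int] at hmem
  have hxe : (QuotientGroup.mk x : Q) = QuotientGroup.mk 1 := hmem
  have := QuotientGroup.eq.1 hxe
  simpa using (inv_mem_iff (x := x⁻¹)).2 (by simpa using this)

end Main

theorem statement_4 (G : Type u) [TopologicalSpace G] [CommGroup G] [IsTopologicalGroup G]
    [T2Space G] (hpre : PrecompactGroup G) (hψ : ℵ₀ < psi G) :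
    pfi G ≤ Cardinal.continuum ∨
      pfi G = sInf {τ : Cardinal.{u} | Cardinal.continuum < τ ∧
        ∃ N : Subgroup G, IsClosed (N : Set G) ∧
          psiAt (G ⧸ N) (QuotientGroup.mk 1) = τ} := by
  by_cases hc : pfi G ≤ Cardinal.continuum
  · exact Or.inl hc
  · right
    obtain ⟨N, hNc, hψN⟩ := exists_quotient_psi_eq_pfi hc
    have hpfic : Cardinal.continuum < pfi G := not_le.1 hc
    set A : Set Cardinal.{u} := {τ : Cardinal.{u} | Cardinal.continuum < τ ∧
        ∃ N : Subgroup G, IsClosed (N : Set G) ∧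
          psiAt (G ⧸ N) (QuotientGroup.mk 1) = τ} with hA
    have hmemA : pfi G ∈ A := ⟨hpfic, N, hNc, hψN⟩
    refine le_antisymm (le_csInf ⟨_, hmemA⟩ ?_) (csInf_le' hmemA)
    rintro τ ⟨hcτ, N', hN'c, hψ'⟩
    have hnf : ¬ IsPseudoTauFine τ G := by
      rw [← hψ']
      exact not_fine_of_quotient hpre N' hN'c (hψ' ▸ hcτ)
    exact csInf_le' (show τ ∈ {τ : Cardinal.{u} | ¬ IsPseudoTauFine τ G} from hnf)
end

section
/- Let G be a precompact abelian topological group whose pseudocharacter ψ(G) is uncountable. Then pfi(G) ≤ (2^𝔠)⁺, the successor cardinal of 2^𝔠. -/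
open Cardinal Topology Pointwise

universe u

section Proof

variable {G : Type u} [TopologicalSpace G] [CommGroup G] [IsTopologicalGroup G]

/-- A decreasing chain of symmetric open identity neighbourhoods with squares shrinking. -/
def GoodChain (O : ℕ → Set G) : Prop :=
  (∀ n, IsOpen (O n)) ∧ (∀ n, (1 : G) ∈ O n) ∧ (∀ n, (O n)⁻¹ = O n) ∧
    ∀ n, O (n + 1) * O (n + 1) ⊆ O n

theorem goodChain_nhds {O : ℕ → Set G} (h : GoodChain O) (n : ℕ) : O n ∈ 𝓝 (1 : G) :=
  (h.1 n).mem_nhds (h.2.1 n)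

theorem exists_sym_sq (U : Set G) (hU : U ∈ 𝓝 (1 : G)) :
    ∃ W : Set G, IsOpen W ∧ (1 : G) ∈ W ∧ W⁻¹ = W ∧ W * W ⊆ U := by
  obtain ⟨V, hVo, hV1, hVU⟩ := exists_open_nhds_one_mul_subset hU
  refine ⟨V ∩ V⁻¹, hVo.inter hVo.inv, ⟨hV1, by simpa using hV1⟩, ?_, ?_⟩
  · ext x
    simp only [Set.mem_inv, Set.mem_inter_iff, inv_inv]
    exact and_comm
  · exact (Set.mul_subset_mul Set.inter_subset_left Set.inter_subset_left).trans hVU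

theorem exists_goodChain (V : ℕ → Set G) (hV : ∀ n, V n ∈ 𝓝 (1 : G)) :
    ∃ O : ℕ → Set G, GoodChain O ∧ ∀ n, O n ⊆ V n := by
  classical
  let T := {W : Set G // IsOpen W ∧ (1 : G) ∈ W ∧ W⁻¹ = W}
  have hT : ∀ W : T, (W : Set G) ∈ 𝓝 (1 : G) := fun W => W.2.1.mem_nhds W.2.2.1
  have step : ∀ U : Set G, U ∈ 𝓝 (1 : G) → ∃ W : T, (W : Set G) * (W : Set G) ⊆ U := by
    intro U hU
    obtain ⟨W, h1, h2, h3, h4⟩ := exists_sym_sq U hU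
    exact ⟨⟨W, h1, h2, h3⟩, h4⟩
  choose st hst using step
  let O : ℕ → T := fun n =>
    Nat.rec (st (V 0) (hV 0))
      (fun n Wn => st ((Wn : Set G) ∩ V (n + 1)) (Filter.inter_mem (hT Wn) (hV (n + 1)))) n
  have hself : ∀ W : T, (W : Set G) ⊆ (W : Set G) * (W : Set G) := by
    intro W x hx
    simpa using Set.mul_mem_mul hx W.2.2.1
  have hOs : ∀ n, O (n + 1) = st ((O n).1 ∩ V (n + 1))
      (Filter.inter_mem (hT (O n)) (hV (n + 1))) := fun _ => rfl
  have hOsucc : ∀ n, (O (n + 1)).1 * (O (n + 1)).1 ⊆ (O n).1 ∩ V (n + 1) := by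
    intro n
    rw [hOs n]
    exact hst _ _
  have hO0 : O 0 = st (V 0) (hV 0) := rfl
  refine ⟨fun n => (O n).1, ⟨fun n => (O n).2.1, fun n => (O n).2.2.1,
    fun n => (O n).2.2.2, ?_⟩, ?_⟩
  · intro n x hx
    exact (hOsucc n hx).1
  · intro n
    cases n with
    | zero =>
      show (O 0).1 ⊆ V 0
      rw [hO0]
      exact (hself _).trans (hst (V 0) (hV 0))
    | succ n =>
      exact fun x hx => (hOsucc n (hself _ hx)).2

/-- The subgroup determined by a good chain. -/
def chainSubgroup (O : ℕ → Set G) (h : GoodChain O) : Subgroup G where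
  carrier := ⋂ n, O n
  one_mem' := Set.mem_iInter.2 fun n => h.2.1 n
  mul_mem' := fun ha hb => Set.mem_iInter.2 fun n =>
    h.2.2.2 n (Set.mul_mem_mul (Set.mem_iInter.1 ha (n + 1)) (Set.mem_iInter.1 hb (n + 1)))
  inv_mem' := fun ha => Set.mem_iInter.2 fun n => by
    rw [← h.2.2.1 n]
    exact Set.inv_mem_inv.2 (Set.mem_iInter.1 ha n)

theorem mem_chainSubgroup {O : ℕ → Set G} {h : GoodChain O} {x : G} :
    x ∈ chainSubgroup O h ↔ ∀ n, x ∈ O n :=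
  Set.mem_iInter

theorem card_quotient_chainSubgroup_le (hpre : PrecompactGroup G) {O : ℕ → Set G}
    (hO : GoodChain O) : #(G ⧸ chainSubgroup O hO) ≤ Cardinal.continuum.{u} := by
  classical
  choose Fs hFs using fun n => hpre (O (n + 1)) (goodChain_nhds hO (n + 1))
  have hcov : ∀ (n : ℕ) (x : G), ∃ g : (Fs n : Finset G), x ∈ (g : G) • O (n + 1) := by
    intro n x
    have hx := hFs n (Set.mem_univ x)
    simp only [Set.mem_iUnion] at hx
    obtain ⟨g, hg, hxg⟩ := hx
    exact ⟨⟨g, hg⟩, hxg⟩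
  choose u hu using fun (x : G) (n : ℕ) => hcov n x
  have key : ∀ x y : G, u x = u y →
      (QuotientGroup.mk x : G ⧸ chainSubgroup O hO) = QuotientGroup.mk y := by
    intro x y hxy
    rw [QuotientGroup.eq]
    rw [mem_chainSubgroup]
    intro n
    have hx := hu x n
    have hy := hu y n
    rw [hxy] at hx
    set g : G := (u y n : G) with hg
    rw [Set.mem_smul_set_iff_inv_smul_mem] at hx hy
    have ha : g⁻¹ * x ∈ O (n + 1) := by simpa [smul_eq_mul] using hx
    have hb : g⁻¹ * y ∈ O (n + 1) := by simpa [smul_eq_mul] using hy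
    have ha' : (g⁻¹ * x)⁻¹ ∈ O (n + 1) := by
      rw [← hO.2.2.1 (n + 1)]; exact Set.inv_mem_inv.2 ha
    have hmul := hO.2.2.2 n (Set.mul_mem_mul ha' hb)
    have heq : (g⁻¹ * x)⁻¹ * (g⁻¹ * y) = x⁻¹ * y := by
      group
    rwa [heq] at hmul
  have hinj : Function.Injective fun q : G ⧸ chainSubgroup O hO => u q.out := by
    intro a b hab
    have := key a.out b.out hab
    rwa [QuotientGroup.out_eq', QuotientGroup.out_eq'] at this
  calc #(G ⧸ chainSubgroup O hO) ≤ #(∀ n : ℕ, (Fs n : Finset G)) := Cardinal.mk_le_of_injective hinj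
    _ = Cardinal.prod (fun n : ℕ => #((Fs n : Finset G) : Type u)) := Cardinal.mk_pi _
    _ ≤ Cardinal.prod (fun _ : ℕ => ℵ₀) :=
        Cardinal.prod_le_prod _ _ (fun n => Cardinal.mk_le_aleph0)
    _ = Cardinal.continuum := by
        rw [Cardinal.prod_const]
        simp [Cardinal.aleph0_power_aleph0]

theorem card_subgroups_above_le {G : Type u} [CommGroup G] (N : Subgroup G) :
    #{H : Subgroup G // N ≤ H} ≤ 2 ^ #(G ⧸ N) := by
  have hmem : ∀ (H : {H : Subgroup G // N ≤ H}) (x : G),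
      (QuotientGroup.mk x : G ⧸ N) ∈ QuotientGroup.mk '' (H.1 : Set G) → x ∈ H.1 := by
    rintro H x ⟨y, hy, hyx⟩
    have hN : y⁻¹ * x ∈ N := QuotientGroup.eq.1 hyx
    have : y * (y⁻¹ * x) ∈ H.1 := H.1.mul_mem hy (H.2 hN)
    simpa using this
  have hinj : Function.Injective fun H : {H : Subgroup G // N ≤ H} =>
      (QuotientGroup.mk '' (H.1 : Set G) : Set (G ⧸ N)) := by
    intro H₁ H₂ h
    have himg : (QuotientGroup.mk '' (H₁.1 : Set G) : Set (G ⧸ N)) =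
        QuotientGroup.mk '' (H₂.1 : Set G) := h
    apply Subtype.ext
    ext x
    constructor
    · intro hx
      refine hmem H₂ x ?_
      rw [← himg]
      exact ⟨x, hx, rfl⟩
    · intro hx
      refine hmem H₁ x ?_
      rw [himg]
      exact ⟨x, hx, rfl⟩
  calc #{H : Subgroup G // N ≤ H} ≤ #(Set (G ⧸ N)) := Cardinal.mk_le_of_injective hinj
    _ = 2 ^ #(G ⧸ N) := Cardinal.mk_set

theorem psi_le_aleph0_of_chain (O : ℕ → Set G) (hop : ∀ n, IsOpen (O n))
    (h1 : ∀ n, (1 : G) ∈ O n) (hint : (⋂ n, O n) ⊆ {(1 : G)}) : psi G ≤ ℵ₀ := by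
  set O' : ULift.{u} ℕ → Set G := fun k => O k.down with hO'
  have hiInter : (⋂ k, O' k) = ⋂ n, O n := by
    ext x
    simp only [Set.mem_iInter]
    exact ⟨fun h n => h ⟨n⟩, fun h k => h k.down⟩
  have hmem : #(Set.range O') ∈
      {c | ∃ S : Set (Set G), (∀ U ∈ S, IsOpen U ∧ (1 : G) ∈ U) ∧ ⋂₀ S = {(1 : G)} ∧ #S = c} := by
    refine ⟨Set.range O', ?_, ?_, rfl⟩
    · rintro U ⟨k, rfl⟩
      exact ⟨hop k.down, h1 k.down⟩
    · rw [Set.sInter_range, hiInter]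
      refine Set.Subset.antisymm hint ?_
      rintro x rfl
      exact Set.mem_iInter.2 h1
  have h1' : psi G ≤ #(Set.range O') := csInf_le' hmem
  exact h1'.trans (Cardinal.mk_range_le.trans Cardinal.mk_le_aleph0)

end Proof

theorem statement_5 (G : Type u) [TopologicalSpace G] [CommGroup G] [IsTopologicalGroup G]
    [T2Space G] (hpre : PrecompactGroup G) (hψ : ℵ₀ < psi G) :
    pfi G ≤ Order.succ ((2 : Cardinal.{u}) ^ Cardinal.continuum) := by
  classical
  set sk : Cardinal.{u} := Order.succ ((2 : Cardinal.{u}) ^ Cardinal.continuum) with hsk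
  have hℵsk : ℵ₀ ≤ sk :=
    (Cardinal.aleph0_le_continuum.trans (Cardinal.cantor _).le).trans (Order.le_succ _)
  suffices h : ¬ IsPseudoTauFine sk G by
    have : sk ∈ {τ : Cardinal.{u} | ¬ IsPseudoTauFine τ G} := h
    exact csInf_le' this
  intro F
  -- G is nontrivial
  have hx0 : ∃ x : G, x ≠ 1 := by
    by_contra h
    push_neg at h
    have : psi G ≤ ℵ₀ :=
      psi_le_aleph0_of_chain (fun _ => Set.univ) (fun _ => isOpen_univ)
        (fun _ => Set.mem_univ _) (by intro x _; simp [h x])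
    exact absurd hψ (not_lt.2 this)
  -- every good chain has nontrivial intersection
  have hnontriv : ∀ O : ℕ → Set G, GoodChain O → ∃ x, x ∈ (⋂ n, O n) ∧ x ≠ (1 : G) := by
    intro O hO
    by_contra h
    push_neg at h
    have : psi G ≤ ℵ₀ :=
      psi_le_aleph0_of_chain O hO.1 hO.2.1 (by intro x hx; simpa using h x hx)
    exact absurd hψ (not_lt.2 this)
  -- T1 separation
  have hsep : ∀ x : G, x ≠ 1 → ∃ U : Set G, U ∈ 𝓝 (1 : G) ∧ x ∉ U := by
    intro x hx
    exact ⟨{x}ᶜ, isOpen_compl_singleton.mem_nhds (by simp [Ne.symm hx]), by simp⟩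
  set ι : Type u := sk.ord.ToType with hι
  -- the stage existence lemma
  have key : ∀ (i : ι) (g : ∀ j : ι, j < i → ℕ → Set G),
      ∃ O : ℕ → Set G, GoodChain O ∧ ∃ x : G, x ∉ (⋂ n, O n) ∧
        ((∀ (j : ι) (hj : j < i) (n : ℕ), g j hj n ∈ 𝓝 (1 : G)) →
          ∀ (j : ι) (hj : j < i) (n : ℕ), x ∈ g j hj n) := by
    intro i g
    by_cases H : ∀ (j : ι) (hj : j < i) (n : ℕ), g j hj n ∈ 𝓝 (1 : G)
    · set ι' := (Set.Iio i) × ULift.{u} ℕ with hι'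
      have hcard : #ι' ≤ sk := by
        rw [hι', Cardinal.mk_prod, Cardinal.lift_id, Cardinal.lift_id]
        calc #(Set.Iio i) * #(ULift.{u} ℕ)
            ≤ sk * sk := mul_le_mul' (Cardinal.mk_Iio_ord_toType i).le
              (Cardinal.mk_le_aleph0.trans hℵsk)
          _ = sk := Cardinal.mul_eq_self hℵsk
      obtain ⟨V, hV, hVsub⟩ := F ι' (fun p => g p.1.1 p.1.2 p.2.down) hcard
        (fun p => H p.1.1 p.1.2 p.2.down)
      obtain ⟨O', hO', hO'V⟩ := exists_goodChain V hV
      obtain ⟨x, hxmem, hxne⟩ := hnontriv O' hO'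
      have hxall : ∀ (j : ι) (hj : j < i) (n : ℕ), x ∈ g j hj n := by
        intro j hj n
        have hxV : x ∈ ⋂ n, V n :=
          Set.mem_iInter.2 fun n => hO'V n (Set.mem_iInter.1 hxmem n)
        have := Set.mem_iInter.1 (hVsub hxV) (⟨⟨j, hj⟩, ⟨n⟩⟩ : ι')
        exact this
      obtain ⟨U₀, hU₀, hxU₀⟩ := hsep x hxne
      obtain ⟨O, hO, hOU⟩ := exists_goodChain (fun _ => U₀) (fun _ => hU₀)
      refine ⟨O, hO, x, ?_, fun _ => hxall⟩
      intro hxO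
      exact hxU₀ (hOU 0 (Set.mem_iInter.1 hxO 0))
    · obtain ⟨x₀, hx₀⟩ := hx0
      obtain ⟨U₀, hU₀, hxU₀⟩ := hsep x₀ hx₀
      obtain ⟨O, hO, hOU⟩ := exists_goodChain (fun _ => U₀) (fun _ => hU₀)
      refine ⟨O, hO, x₀, ?_, fun h => absurd h H⟩
      intro hxO
      exact hxU₀ (hOU 0 (Set.mem_iInter.1 hxO 0))
  -- transfinite recursion
  have wf : WellFounded ((· < ·) : ι → ι → Prop) := (wellFoundedLT_toType sk.ord).wf
  set f : ι → ℕ → Set G :=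
    wf.fix (fun i rec => Classical.choose (key i rec)) with hf
  have hfeq : ∀ i : ι, f i = Classical.choose (key i fun j _ => f j) := by
    intro i
    rw [hf]
    exact wf.fix_eq _ i
  have hGood : ∀ i : ι, GoodChain (f i) := by
    intro i
    rw [hfeq i]
    exact (Classical.choose_spec (key i fun j _ => f j)).1
  have hx : ∀ i : ι, ∃ x : G, x ∉ (⋂ n, f i n) ∧ ∀ (j : ι) (_ : j < i) (n : ℕ), x ∈ f j n := by
    intro i
    have hs := (Classical.choose_spec (key i fun j _ => f j)).2
    rw [hfeq i]
    obtain ⟨x, hx1, hx2⟩ := hs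
    exact ⟨x, hx1, fun j hj n => hx2 (fun j _ n => goodChain_nhds (hGood j) n) j hj n⟩
  set N : ι → Subgroup G := fun i => chainSubgroup (f i) (hGood i) with hN
  set xs : ι → G := fun i => (hx i).choose with hxs
  have hxs1 : ∀ i : ι, xs i ∉ (⋂ n, f i n) := fun i => (hx i).choose_spec.1
  have hxs2 : ∀ (i j : ι), j < i → ∀ n, xs i ∈ f j n :=
    fun i j hj n => (hx i).choose_spec.2 j hj n
  have hNinj : Function.Injective N := by
    intro a b hab
    by_contra hne
    rcases lt_or_gt_of_ne hne with h | h
    · exact hxs1 b (Set.mem_iInter.2 fun n => by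
        have : xs b ∈ f a n := hxs2 b a h n
        have hmem : xs b ∈ N a := mem_chainSubgroup.2 fun m => hxs2 b a h m
        rw [hab] at hmem
        exact mem_chainSubgroup.1 hmem n)
    · exact hxs1 a (Set.mem_iInter.2 fun n => by
        have hmem : xs a ∈ N b := mem_chainSubgroup.2 fun m => hxs2 a b h m
        rw [← hab] at hmem
        exact mem_chainSubgroup.1 hmem n)
  -- final application of fineness
  have hcardι : #ι = sk := by rw [hι]; exact Cardinal.mk_ord_toType sk
  have hcardfin : #(ι × ULift.{u} ℕ) ≤ sk := by
    rw [Cardinal.mk_prod, Cardinal.lift_id, Cardinal.lift_id]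
    calc #ι * #(ULift.{u} ℕ)
        ≤ sk * sk := mul_le_mul' hcardι.le (Cardinal.mk_le_aleph0.trans hℵsk)
      _ = sk := Cardinal.mul_eq_self hℵsk
  obtain ⟨V, hV, hVsub⟩ := F (ι × ULift.{u} ℕ) (fun p => f p.1 p.2.down) hcardfin
    (fun p => goodChain_nhds (hGood p.1) p.2.down)
  obtain ⟨Ostar, hOstar, hOstarV⟩ := exists_goodChain V hV
  set Nstar : Subgroup G := chainSubgroup Ostar hOstar with hNstar
  have hNstar_le : ∀ i : ι, Nstar ≤ N i := by
    intro i x hxmem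
    have hx1 : x ∈ ⋂ n, V n :=
      Set.mem_iInter.2 fun n => hOstarV n (mem_chainSubgroup.1 hxmem n)
    refine mem_chainSubgroup.2 fun n => ?_
    exact Set.mem_iInter.1 (hVsub hx1) (⟨i, ⟨n⟩⟩ : ι × ULift.{u} ℕ)
  have hΨinj : Function.Injective
      (fun i : ι => (⟨N i, hNstar_le i⟩ : {H : Subgroup G // Nstar ≤ H})) := by
    intro a b hab
    exact hNinj (congrArg Subtype.val hab)
  have hfinal : sk ≤ (2 : Cardinal.{u}) ^ Cardinal.continuum := by
    calc sk = #ι := hcardι.symm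
      _ ≤ #{H : Subgroup G // Nstar ≤ H} := Cardinal.mk_le_of_injective hΨinj
      _ ≤ 2 ^ #(G ⧸ Nstar) := card_subgroups_above_le Nstar
      _ ≤ (2 : Cardinal.{u}) ^ Cardinal.continuum :=
          Cardinal.power_le_power_left two_ne_zero
            (card_quotient_chainSubgroup_le hpre hOstar)
  have : ((2 : Cardinal.{u}) ^ Cardinal.continuum) < sk := Order.lt_succ _
  exact absurd hfinal (not_le.2 this)
end

section
/- For every uncountable regular cardinal τ ≤ 𝔠⁺ there exists a precompact abelian (Hausdorff) topological group G with pfi(G) = τ; that is, G has uncountable pseudocharacter, is pseudo-λ-fine for every infinite cardinal λ < τ, and is not pseudo-τ-fine. -/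
open Cardinal Topology Pointwise

universe u

lemma zmod2_eq_one (v : ZMod 2) (h : v ≠ 0) : v = 1 := by revert v; decide

lemma exists_D (τ : Cardinal.{u}) (h3 : τ ≤ Order.succ Cardinal.continuum)
    (α : τ.ord.ToType) :
    ∃ Dα : Set (τ.ord.ToType → ZMod 2), Dα.Countable ∧
      (∀ d ∈ Dα, ∀ ξ, ¬ ξ ≤ α → d ξ = 0) ∧
      (∀ b : τ.ord.ToType →₀ ZMod 2, (∃ ξ ∈ b.support, ξ ≤ α) →
        ∃ d ∈ Dα, Finsupp.linearCombination (ZMod 2) d b = 1) := by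
  classical
  have hIio : #(Set.Iio α) ≤ Cardinal.continuum.{u} :=
    Order.lt_succ_iff.mp (lt_of_lt_of_le (Cardinal.mk_Iio_ord_toType α) h3)
  have hIic : #(Set.Iic α) ≤ Cardinal.continuum.{u} := by
    have heq : (Set.Iic α) = insert α (Set.Iio α) := by
      ext x; simp [le_iff_lt_or_eq, or_comm]
    rw [heq]
    calc #(insert α (Set.Iio α) : Set τ.ord.ToType) ≤ #(Set.Iio α) + 1 := Cardinal.mk_insert_le
      _ ≤ Cardinal.continuum + 1 := add_le_add_left hIio 1
      _ = Cardinal.continuum := Cardinal.add_one_eq Cardinal.aleph0_le_continuum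
  have hR : #(Set.Iic α) ≤ #(ULift.{u} ℝ) := by
    rwa [Cardinal.mk_uLift, Cardinal.mk_real, Cardinal.lift_continuum]
  obtain ⟨e⟩ := (Cardinal.le_def _ _).1 hR
  set h : τ.ord.ToType → ℝ := fun ξ => if hξ : ξ ≤ α then (e ⟨ξ, hξ⟩).down else 0 with hh
  have hinj : ∀ ξ η, ξ ≤ α → η ≤ α → h ξ = h η → ξ = η := by
    intro ξ η hξ hη heq
    rw [hh] at heq
    simp only [dif_pos hξ, dif_pos hη] at heq
    exact congrArg Subtype.val (e.injective (ULift.ext _ _ heq))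
  refine ⟨Set.range (fun pq : ℚ × ℚ => fun ξ : τ.ord.ToType =>
      if ξ ≤ α ∧ (pq.1 : ℝ) < h ξ ∧ h ξ < (pq.2 : ℝ) then (1 : ZMod 2) else 0),
    Set.countable_range _, ?_, ?_⟩
  · rintro d ⟨pq, rfl⟩ ξ hξ
    simp only [hξ, false_and, if_false]
  · rintro b ⟨ξ₁, hξ₁s, hξ₁le⟩
    set E := b.support.filter (fun ξ => ξ ≤ α) with hE
    have hEne : E.Nonempty := ⟨ξ₁, Finset.mem_filter.mpr ⟨hξ₁s, hξ₁le⟩⟩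
    obtain ⟨ξ₀, hξ₀E, hmin⟩ := Finset.exists_min_image E h hEne
    have hξ₀le : ξ₀ ≤ α := (Finset.mem_filter.mp hξ₀E).2
    have hξ₀s : ξ₀ ∈ b.support := (Finset.mem_filter.mp hξ₀E).1
    have hgt : ∀ ξ ∈ E, ξ ≠ ξ₀ → h ξ₀ < h ξ := by
      intro ξ hξE hne
      rcases lt_or_eq_of_le (hmin ξ hξE) with hlt | heq
      · exact hlt
      · exact absurd (hinj _ _ hξ₀le ((Finset.mem_filter.mp hξE).2) heq) (Ne.symm hne)
    have hq : ∃ q : ℚ, h ξ₀ < (q : ℝ) ∧ ∀ ξ ∈ E, ξ ≠ ξ₀ → (q : ℝ) ≤ h ξ := by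
      by_cases hB : ((E.erase ξ₀).image h).Nonempty
      · have hm := Finset.min'_mem _ hB
        obtain ⟨ξm, hξm, hξmh⟩ := Finset.mem_image.mp hm
        have hlt : h ξ₀ < ((E.erase ξ₀).image h).min' hB := by
          rw [← hξmh]
          exact hgt _ (Finset.mem_of_mem_erase hξm) (Finset.ne_of_mem_erase hξm)
        obtain ⟨q, hq1, hq2⟩ := exists_rat_btwn hlt
        refine ⟨q, hq1, fun ξ hξE hne => ?_⟩
        refine le_trans (le_of_lt hq2) ?_
        exact Finset.min'_le _ _ (Finset.mem_image_of_mem h (Finset.mem_erase.mpr ⟨hne, hξE⟩))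
      · obtain ⟨q, hq1⟩ := exists_rat_gt (h ξ₀)
        refine ⟨q, hq1, fun ξ hξE hne => ?_⟩
        exact absurd ⟨h ξ, Finset.mem_image_of_mem h (Finset.mem_erase.mpr ⟨hne, hξE⟩)⟩ hB
    obtain ⟨q, hq1, hq2⟩ := hq
    obtain ⟨p, hp⟩ := exists_rat_lt (h ξ₀)
    refine ⟨_, ⟨(p, q), rfl⟩, ?_⟩
    rw [Finsupp.linearCombination_apply]
    simp only [Finsupp.sum]
    rw [Finset.sum_eq_single ξ₀ ?h0 ?h1]
    case h0 =>
      intro ξ hξs hne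
      by_cases hξle : ξ ≤ α
      · have hξE : ξ ∈ E := Finset.mem_filter.mpr ⟨hξs, hξle⟩
        have hnlt : ¬ h ξ < (q : ℝ) := not_lt.mpr (hq2 ξ hξE hne)
        rw [if_neg (by tauto)]
        simp
      · rw [if_neg (by tauto)]
        simp
    case h1 =>
      intro habs
      exact absurd hξ₀s habs
    rw [if_pos ⟨hξ₀le, hp, hq1⟩, zmod2_eq_one (b ξ₀) (Finsupp.mem_support_iff.mp hξ₀s)]
    simp

theorem main_construction (τ : Cardinal.{u}) (h1 : ℵ₀ < τ)
    {T : Type u} [LinearOrder T] [Nonempty T]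
    (D : T → Set (T → ZMod 2))
    (hDcount : ∀ α, (D α).Countable)
    (hDsupp : ∀ α, ∀ d ∈ D α, ∀ ξ : T, ¬ ξ ≤ α → d ξ = 0)
    (hDsep : ∀ (α : T) (b : T →₀ ZMod 2), (∃ ξ ∈ b.support, ξ ≤ α) →
        ∃ d ∈ D α, Finsupp.linearCombination (ZMod 2) d b = 1)
    (hbound : ∀ S : Set T, #S < τ → ∃ γ : T, ∀ x ∈ S, x < γ)
    (hXcard : #(↥(⋃ α, D α)) ≤ τ) :
    ∃ (G : Type u) (_ : TopologicalSpace G) (_ : CommGroup G) (_ : IsTopologicalGroup G)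
      (_ : T2Space G), PrecompactGroup G ∧ ℵ₀ < psi G ∧
        (∀ lam : Cardinal.{u}, ℵ₀ ≤ lam → lam < τ → IsPseudoTauFine lam G) ∧
        ¬ IsPseudoTauFine τ G ∧ pfi G = τ := by
  classical
  set Xs : Set (T → ZMod 2) := ⋃ α, D α with hXs
  letI : TopologicalSpace (ZMod 2) := ⊥
  haveI : DiscreteTopology (ZMod 2) := ⟨rfl⟩
  set lin : ↥Xs → (T →₀ ZMod 2) →ₗ[ZMod 2] ZMod 2 :=
    fun χ => Finsupp.linearCombination (ZMod 2) (χ : T → ZMod 2) with hlin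
  set Φ : (T →₀ ZMod 2) →+ (↥Xs → ZMod 2) :=
    { toFun := fun a χ => lin χ a
      map_zero' := by funext χ; simp
      map_add' := by intro a b; funext χ; simp } with hΦ
  letI tA : TopologicalSpace (T →₀ ZMod 2) := TopologicalSpace.induced Φ inferInstance
  haveI : IsTopologicalAddGroup (T →₀ ZMod 2) := topologicalAddGroup_induced Φ
  -- injectivity
  have hsep0 : ∀ a : T →₀ ZMod 2, a ≠ 0 → ∃ χ : ↥Xs, lin χ a ≠ 0 := by
    intro a ha
    obtain ⟨ξ, hξ⟩ := Finsupp.support_nonempty_iff.mpr ha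
    obtain ⟨d, hd, hd1⟩ := hDsep ξ a ⟨ξ, hξ, le_refl ξ⟩
    exact ⟨⟨d, Set.mem_iUnion.mpr ⟨ξ, hd⟩⟩, by rw [hlin]; simp only; rw [hd1]; exact one_ne_zero⟩
  have hΦinj : Function.Injective Φ := by
    rw [injective_iff_map_eq_zero]
    intro a ha
    by_contra hne
    obtain ⟨χ, hχ⟩ := hsep0 a hne
    exact hχ (congrFun ha χ)
  haveI : T2Space (T →₀ ZMod 2) :=
    Topology.IsEmbedding.t2Space ⟨⟨rfl⟩, hΦinj⟩
  -- basic neighbourhoods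
  set NF : Finset ↥Xs → Set (T →₀ ZMod 2) :=
    fun F => {a | ∀ χ ∈ F, lin χ a = 0} with hNF
  have hNFopen : ∀ F, IsOpen (NF F) := by
    intro F
    have heq : NF F = ⋂ χ ∈ F, (⇑Φ) ⁻¹' ((fun g : ↥Xs → ZMod 2 => g χ) ⁻¹' {0}) := by
      ext a
      simp only [hNF, Set.mem_setOf_eq, Set.mem_iInter, Set.mem_preimage,
        Set.mem_singleton_iff]
      exact Iff.rfl
    rw [heq]
    refine isOpen_biInter_finset fun χ _ => ?_
    exact isOpen_induced ((isOpen_discrete ({0} : Set (ZMod 2))).preimage (continuous_apply χ))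
  have hNFmem : ∀ F, NF F ∈ 𝓝 (0 : T →₀ ZMod 2) := by
    intro F
    refine (hNFopen F).mem_nhds ?_
    intro χ _
    simp [hlin]
  have hnhds : ∀ S : Set (T →₀ ZMod 2), S ∈ 𝓝 (0 : T →₀ ZMod 2) ↔ ∃ F, NF F ⊆ S := by
    intro S
    constructor
    · intro hS
      rw [nhds_induced] at hS
      rw [map_zero] at hS
      obtain ⟨t, ht, hsub⟩ := Filter.mem_comap.mp hS
      rw [nhds_pi] at ht
      obtain ⟨I, hIfin, V, hV, hpi⟩ := Filter.mem_pi.mp ht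
      refine ⟨hIfin.toFinset, fun a ha => hsub ?_⟩
      refine Set.mem_preimage.mpr (hpi ?_)
      refine Set.mem_pi.mpr fun χ hχ => ?_
      have h0 : (0 : ZMod 2) ∈ V χ := by
        have := hV χ
        rw [nhds_discrete] at this
        simpa using this
      have hz : Φ a χ = 0 := ha χ (hIfin.mem_toFinset.mpr hχ)
      rw [hz]
      exact h0
    · rintro ⟨F, hF⟩
      exact Filter.mem_of_superset (hNFmem F) hF
  -- helper lemmas
  have hidx : ∀ χ : ↥Xs, ∃ α : T, (χ : T → ZMod 2) ∈ D α := fun χ => Set.mem_iUnion.mp χ.2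
  set idx : ↥Xs → T := fun χ => (hidx χ).choose with hidxdef
  have hidxmem : ∀ χ, (χ : T → ZMod 2) ∈ D (idx χ) := fun χ => (hidx χ).choose_spec
  have hlin0 : ∀ (χ : T → ZMod 2) (a : T →₀ ZMod 2), (∀ ξ ∈ a.support, χ ξ = 0) →
      Finsupp.linearCombination (ZMod 2) χ a = 0 := by
    intro χ a h
    rw [Finsupp.linearCombination_apply]
    simp only [Finsupp.sum]
    exact Finset.sum_eq_zero fun ξ hξ => by rw [h ξ hξ, smul_zero]
  have hkey : ∀ C : Set ↥Xs, #C < τ →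
      ∃ γ : T, ∀ χ ∈ C, ∀ ξ : T, γ ≤ ξ → (χ : T → ZMod 2) ξ = 0 := by
    intro C hC
    obtain ⟨γ, hγ⟩ := hbound (idx '' C) (lt_of_le_of_lt Cardinal.mk_image_le hC)
    refine ⟨γ, fun χ hχ ξ hξ => ?_⟩
    refine hDsupp (idx χ) _ (hidxmem χ) ξ ?_
    intro hle
    exact absurd (lt_of_le_of_lt hle (hγ _ (Set.mem_image_of_mem idx hχ))) (not_lt.mpr hξ)
  have hann : ∀ (γ : T) (a : T →₀ ZMod 2),
      (∀ d ∈ D γ, Finsupp.linearCombination (ZMod 2) d a = 0) →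
      ∀ ξ ∈ a.support, ¬ ξ ≤ γ := by
    intro γ a h ξ hξ hle
    obtain ⟨d, hd, hd1⟩ := hDsep γ a ⟨ξ, hξ, hle⟩
    rw [h d hd] at hd1
    exact zero_ne_one hd1
  have hsingle : ∀ γ : T, γ ∈ (Finsupp.single γ (1 : ZMod 2)).support := by
    intro γ
    rw [Finsupp.mem_support_iff, Finsupp.single_eq_same]
    exact one_ne_zero
  have hDγne : ∀ γ : T, ∃ d, d ∈ D γ := by
    intro γ
    obtain ⟨d, hd, _⟩ := hDsep γ (Finsupp.single γ 1) ⟨γ, hsingle γ, le_refl γ⟩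
    exact ⟨d, hd⟩
  -- the group
  set G : Type u := Multiplicative (T →₀ ZMod 2) with hG
  haveI hT2G : T2Space G := ‹T2Space (T →₀ ZMod 2)›
  have hGn : 𝓝 (1 : G) = 𝓝 (0 : T →₀ ZMod 2) := rfl
  -- pseudo-fineness for small cardinals
  have hfine : ∀ lam : Cardinal.{u}, lam < τ → IsPseudoTauFine lam G := by
    intro lam hlam ι U hι hU
    have hU' : ∀ i, ∃ F : Finset ↥Xs, NF F ⊆ U i := fun i => (hnhds (U i)).1 (hGn ▸ hU i)
    choose F hF using hU'
    set C : Set ↥Xs := ⋃ i, (F i : Set ↥Xs) with hC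
    have hCcard : #C < τ := by
      rw [hC]
      calc #(↥(⋃ i, (F i : Set ↥Xs))) ≤ Cardinal.sum (fun i : ι => #(↥((F i : Set ↥Xs)))) :=
          Cardinal.mk_iUnion_le_sum_mk
        _ ≤ Cardinal.sum (fun _ : ι => ℵ₀) :=
            Cardinal.sum_le_sum _ _ (fun i => le_of_lt (Cardinal.lt_aleph0_of_finite _))
        _ = #ι * ℵ₀ := Cardinal.sum_const' _ _
        _ < τ := Cardinal.mul_lt_of_lt (le_of_lt h1) (lt_of_le_of_lt hι hlam) h1
    obtain ⟨γ, hγ⟩ := hkey C hCcard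
    obtain ⟨d₀, hd₀⟩ := hDγne γ
    obtain ⟨f, hfrange⟩ := Set.Countable.exists_eq_range (hDcount γ) ⟨d₀, hd₀⟩
    have hfmem : ∀ n, f n ∈ Xs :=
      fun n => Set.mem_iUnion.mpr ⟨γ, hfrange ▸ Set.mem_range_self n⟩
    refine ⟨fun n => NF {⟨f n, hfmem n⟩}, fun n => hGn.symm ▸ hNFmem _, ?_⟩
    intro a ha
    have hda : ∀ d ∈ D γ, Finsupp.linearCombination (ZMod 2) d (Multiplicative.toAdd a) = 0 := by
      intro d hd
      rw [hfrange] at hd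
      obtain ⟨n, rfl⟩ := hd
      exact (Set.mem_iInter.mp ha n) ⟨f n, hfmem n⟩ (Finset.mem_singleton_self _)
    have hsupp := hann γ (Multiplicative.toAdd a) hda
    refine Set.mem_iInter.mpr fun i => hF i ?_
    intro χ hχF
    refine hlin0 _ _ fun ξ hξ => ?_
    exact hγ χ (Set.mem_iUnion.mpr ⟨i, Finset.mem_coe.mpr hχF⟩) ξ
      (le_of_lt (not_le.mp (hsupp ξ hξ)))
  -- not pseudo-τ-fine
  have hnotfine : ¬ IsPseudoTauFine τ G := by
    intro hfineτ
    obtain ⟨V, hV, hsub⟩ := hfineτ ↥Xs (fun χ => NF {χ}) hXcard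
      (fun χ => hGn.symm ▸ hNFmem _)
    have hV' : ∀ n, ∃ F : Finset ↥Xs, NF F ⊆ V n := fun n => (hnhds (V n)).1 (hGn ▸ hV n)
    choose F hF using hV'
    set C : Set ↥Xs := ⋃ n, (F n : Set ↥Xs) with hC
    have hCcard : #C < τ := by
      have hcnt : C.Countable := Set.countable_iUnion fun n => (F n).countable_toSet
      exact lt_of_le_of_lt hcnt.le_aleph0 h1
    obtain ⟨γ, hγ⟩ := hkey C hCcard
    set a : T →₀ ZMod 2 := Finsupp.single γ 1 with ha
    have haV : ∀ n, (Multiplicative.ofAdd a) ∈ V n := by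
      intro n
      refine hF n ?_
      intro χ hχ
      refine hlin0 _ _ fun ξ hξ => ?_
      have hξγ : ξ = γ := by
        have := Finsupp.support_single_subset hξ
        simpa using this
      subst hξγ
      exact hγ χ (Set.mem_iUnion.mpr ⟨n, Finset.mem_coe.mpr hχ⟩) ξ (le_refl ξ)
    have hmem : Multiplicative.ofAdd a ∈ ⋂ χ : ↥Xs, NF {χ} :=
      hsub (Set.mem_iInter.mpr haV)
    obtain ⟨d, hd, hd1⟩ := hDsep γ a ⟨γ, hsingle γ, le_refl γ⟩
    have hz' : Finsupp.linearCombination (ZMod 2) d a = 0 :=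
      (Set.mem_iInter.mp hmem ⟨d, Set.mem_iUnion.mpr ⟨γ, hd⟩⟩) _ (Finset.mem_singleton_self _)
    rw [hz'] at hd1
    exact zero_ne_one hd1
  -- precompactness
  have hprec : PrecompactGroup G := by
    intro U hU
    obtain ⟨F, hF⟩ := (hnhds U).1 (hGn ▸ hU)
    set q : (T →₀ ZMod 2) → (↥F → ZMod 2) := fun a χ => lin χ.1 a with hq
    set r : (↥F → ZMod 2) → (T →₀ ZMod 2) :=
      fun v => if h : ∃ a, q a = v then h.choose else 0 with hr
    refine ⟨Finset.univ.image (fun v : ↥F → ZMod 2 => (Multiplicative.ofAdd (r v) : G)),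
      fun a _ => ?_⟩
    set v := q (Multiplicative.toAdd a) with hv
    have hex : ∃ b, q b = v := ⟨_, rfl⟩
    have hrv : q (r v) = v := by
      rw [hr]; simp only [dif_pos hex]; exact hex.choose_spec
    refine Set.mem_iUnion₂.mpr ⟨Multiplicative.ofAdd (r v),
      Finset.mem_image.mpr ⟨v, Finset.mem_univ _, rfl⟩, ?_⟩
    rw [Set.mem_smul_set_iff_inv_smul_mem]
    have hel : (Multiplicative.ofAdd (r v))⁻¹ • a =
        Multiplicative.ofAdd (-(r v) + Multiplicative.toAdd a) := rfl
    rw [hel]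
    refine hF ?_
    intro χ hχ
    show lin χ (-(r v) + Multiplicative.toAdd a) = 0
    rw [map_add, map_neg]
    have h1' : lin χ (r v) = q (r v) ⟨χ, hχ⟩ := rfl
    have h2' : lin χ (Multiplicative.toAdd a) = q (Multiplicative.toAdd a) ⟨χ, hχ⟩ := rfl
    rw [h1', h2', hrv, ← hv]
    exact neg_add_cancel _
  -- psi > ℵ₀
  have hpsi : ℵ₀ < psi G := by
    have hne : {c | ∃ S : Set (Set G), (∀ U ∈ S, IsOpen U ∧ (1:G) ∈ U) ∧
        ⋂₀ S = {1} ∧ #S = c}.Nonempty := by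
      refine ⟨_, {U : Set G | IsOpen U ∧ (1:G) ∈ U}, fun U h => h, ?_, rfl⟩
      refine Set.eq_singleton_iff_unique_mem.mpr ⟨?_, ?_⟩
      · exact Set.mem_sInter.mpr fun U hU => hU.2
      · intro x hx
        by_contra hne1
        have hopen : IsOpen ({x}ᶜ : Set G) := isOpen_compl_singleton
        have h1m : (1 : G) ∈ ({x}ᶜ : Set G) := by
          simp only [Set.mem_compl_iff, Set.mem_singleton_iff]
          exact fun h => hne1 h.symm
        have := Set.mem_sInter.mp hx _ ⟨hopen, h1m⟩
        simp at this
    by_contra hle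
    push_neg at hle
    have hmem : psi G ∈ {c | ∃ S : Set (Set G), (∀ U ∈ S, IsOpen U ∧ (1:G) ∈ U) ∧
        ⋂₀ S = {1} ∧ #S = c} := csInf_mem hne
    obtain ⟨S, hSopen, hSint, hScard⟩ := hmem
    have hScnt : #(↥S) ≤ ℵ₀ := le_trans (le_of_eq hScard) hle
    have hS' : ∀ U : ↥S, ∃ F : Finset ↥Xs, NF F ⊆ (U : Set G) := by
      intro U
      refine (hnhds (U : Set G)).1 (hGn ▸ ?_)
      exact ((hSopen U U.2).1).mem_nhds (hSopen U U.2).2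
    choose F hFsub using hS'
    set C : Set ↥Xs := ⋃ U : ↥S, (F U : Set ↥Xs) with hC
    have hCcard : #C < τ := by
      haveI : Countable ↥S := Cardinal.mk_le_aleph0_iff.mp hScnt
      have hcnt : C.Countable := Set.countable_iUnion fun U => (F U).countable_toSet
      exact lt_of_le_of_lt hcnt.le_aleph0 h1
    obtain ⟨γ, hγ⟩ := hkey C hCcard
    set a : T →₀ ZMod 2 := Finsupp.single γ 1 with ha
    have haU : ∀ U ∈ S, (Multiplicative.ofAdd a) ∈ U := by
      intro U hU
      refine hFsub ⟨U, hU⟩ ?_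
      intro χ hχ
      refine hlin0 _ _ fun ξ hξ => ?_
      have hξγ : ξ = γ := by
        have := Finsupp.support_single_subset hξ
        simpa using this
      subst hξγ
      exact hγ χ (Set.mem_iUnion.mpr ⟨⟨U, hU⟩, Finset.mem_coe.mpr hχ⟩) ξ (le_refl ξ)
    have : Multiplicative.ofAdd a ∈ (⋂₀ S : Set G) := Set.mem_sInter.mpr haU
    rw [hSint] at this
    have ha0 : a = 0 := by
      have := Set.mem_singleton_iff.mp this
      exact Multiplicative.ofAdd.injective this
    rw [ha] at ha0
    exact one_ne_zero (Finsupp.single_eq_zero.mp ha0)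
  refine ⟨G, inferInstance, inferInstance, inferInstance, hT2G, hprec, hpsi,
    fun lam _ hlam => hfine lam hlam, hnotfine, ?_⟩
  refine le_antisymm (csInf_le' hnotfine) ?_
  refine le_csInf ⟨τ, hnotfine⟩ fun b hb => ?_
  by_contra hbτ
  push_neg at hbτ
  exact hb (hfine b hbτ)


theorem statement_6 (τ : Cardinal.{u}) (h1 : ℵ₀ < τ) (h2 : τ.IsRegular)
    (h3 : τ ≤ Order.succ Cardinal.continuum) :
    ∃ (G : Type u) (_ : TopologicalSpace G) (_ : CommGroup G) (_ : IsTopologicalGroup G)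
      (_ : T2Space G), PrecompactGroup G ∧ ℵ₀ < psi G ∧
        (∀ lam : Cardinal.{u}, ℵ₀ ≤ lam → lam < τ → IsPseudoTauFine lam G) ∧
        ¬ IsPseudoTauFine τ G ∧ pfi G = τ := by
  haveI : Nonempty τ.ord.ToType := by
    rw [Ordinal.toType_nonempty_iff_ne_zero]
    intro h0
    have : τ = 0 := by simpa using congrArg Ordinal.card h0
    rw [this] at h1
    exact absurd h1 (by simp)
  have hD := fun α => exists_D τ h3 α
  choose D hDc hDsupp hDsep using hD
  have hbound : ∀ S : Set τ.ord.ToType, #S < τ → ∃ γ, ∀ x ∈ S, x < γ := fun S hS => by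
    have hnc : ¬ IsCofinal S := fun hc => absurd (Order.cof_le hc)
      (not_le.mpr (by rw [Ordinal.cof_toType, h2.cof_eq]; exact hS))
    simp only [IsCofinal, not_forall, not_exists, not_and, not_le] at hnc
    exact hnc
  have hXcard : #(↥(⋃ α, D α)) ≤ τ := by
    calc #(↥(⋃ α, D α)) ≤ #τ.ord.ToType * ⨆ α, #(↥(D α)) := Cardinal.mk_iUnion_le _
      _ ≤ τ * ℵ₀ := by
          rw [Cardinal.mk_ord_toType]
          exact mul_le_mul_right (ciSup_le' fun α => (hDc α).le_aleph0) τ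
      _ = τ := by
          rw [Cardinal.mul_eq_max (le_of_lt h1) le_rfl, max_eq_left (le_of_lt h1)]
  exact main_construction τ h1 D hDc hDsupp hDsep hbound hXcard
end

section
/- Let τ be an uncountable regular cardinal with τ ≤ 𝔠⁺, let X be a set of cardinality τ, let F(X) be the free abelian group on X, and for each subset Y ⊆ X with |Y| < τ fix a homomorphism f_Y : F(X) → 𝕋 with kernel exactly F(X\Y) (the subgroup generated by X\Y). Endow G = F(X) with the coarsest group topology making all the f_Y continuous. Then for every subset A of the dual group G* (the group of continuous homomorphisms G → 𝕋) with |A| < τ, there exists Y ⊆ X with |Y| < τ such that F(X\Y) ⊆ ⋂_{a∈A} ker a. -/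
open Cardinal Topology Pointwise

universe u

lemma aux_norm_third {s : ℝ} (h1 : 1/3 ≤ s) (h2 : s < 2/3) :
    (1/3:ℝ) ≤ ‖((s:ℝ) : AddCircle (1:ℝ))‖ := by
  rw [AddCircle.norm_eq]
  simp only [inv_one, one_mul, mul_one]
  have hm : (round s : ℝ) ≤ 0 ∨ 1 ≤ (round s : ℝ) := by
    exact_mod_cast (by omega : round s ≤ 0 ∨ 1 ≤ round s)
  rcases hm with hm | hm
  · calc (1/3:ℝ) ≤ s - round s := by linarith
    _ ≤ |s - round s| := le_abs_self _
  · calc (1/3:ℝ) ≤ -(s - round s) := by linarith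
    _ ≤ |s - round s| := neg_le_abs _

lemma exists_nsmul_third (y : AddCircle (1:ℝ)) (hy : y ≠ 0) :
    ∃ n : ℕ, (1/3:ℝ) ≤ ‖n • y‖ := by
  obtain ⟨x0, rfl⟩ := QuotientAddGroup.mk_surjective y
  set x : ℝ := x0 - round x0 with hxdef
  have hxy : ((x : ℝ) : AddCircle (1:ℝ)) = (x0 : AddCircle (1:ℝ)) := by
    have : ((round x0 : ℝ) : AddCircle (1:ℝ)) = 0 := by
      rw [AddCircle.coe_eq_zero_iff]
      exact ⟨round x0, by simp⟩
    rw [hxdef, sub_eq_add_neg, AddCircle.coe_add, AddCircle.coe_neg, this]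
    simp
  have hxne : x ≠ 0 := by
    intro h
    apply hy
    rw [← hxy, h]
    simp
  set t : ℝ := |x| with htdef
  have ht0 : 0 < t := abs_pos.mpr hxne
  have ht2 : t ≤ 1/2 := abs_sub_round x0
  have key : ∃ n : ℕ, 1/3 ≤ (n:ℝ) * t ∧ (n:ℝ) * t < 2/3 := by
    rcases le_or_gt (1/3) t with h | h
    · exact ⟨1, by simpa using h, by push_cast; linarith⟩
    · refine ⟨⌈(1/3)/t⌉₊, ?_, ?_⟩
      · have h1 := Nat.le_ceil ((1/3)/t)
        rw [div_le_iff₀ ht0] at h1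
        linarith
      · have hc : (⌈(1/3)/t⌉₊ : ℝ) < (1/3)/t + 1 := Nat.ceil_lt_add_one (by positivity)
        have hu : ((1/3)/t) * t = 1/3 := div_mul_cancel₀ _ ht0.ne'
        nlinarith [mul_lt_mul_of_pos_right hc ht0]
  obtain ⟨n, hn1, hn2⟩ := key
  refine ⟨n, ?_⟩
  have hcoe : (n : ℕ) • ((x0 : AddCircle (1:ℝ))) = ((n * x : ℝ) : AddCircle (1:ℝ)) := by
    rw [← hxy, ← AddCircle.coe_nsmul]
    norm_num [nsmul_eq_mul]
  rw [hcoe]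
  rcases abs_cases x with ⟨hx, _⟩ | ⟨hx, _⟩
  · have : (n:ℝ) * x = n * t := by rw [htdef, hx]
    rw [this]; exact aux_norm_third hn1 hn2
  · have : (n:ℝ) * x = -(n * t) := by rw [htdef, hx]; ring
    rw [this, AddCircle.coe_neg, norm_neg]
    exact aux_norm_third hn1 hn2

lemma nss_third (H : AddSubgroup (AddCircle (1:ℝ))) (hH : ∀ x ∈ H, ‖x‖ < 1/3) :
    ∀ x ∈ H, x = 0 := by
  intro x hx
  by_contra hne
  obtain ⟨n, hn⟩ := exists_nsmul_third x hne
  have := hH (n • x) (AddSubgroup.nsmul_mem H hx n)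
  linarith

lemma per_char {X : Type u} (τ : Cardinal.{u}) (hreg : τ.IsRegular) (hτ : ℵ₀ < τ)
    (f : Set X → (FreeAbelianGroup X →+ AddCircle (1 : ℝ)))
    (hker : ∀ Y : Set X, #Y < τ →
      (f Y).ker = AddSubgroup.closure (FreeAbelianGroup.of '' Yᶜ))
    (a : FreeAbelianGroup X →+ AddCircle (1 : ℝ))
    (ha : @Continuous _ _
      (⨅ (Y : Set X) (_ : #Y < τ), TopologicalSpace.induced (f Y) inferInstance)
      inferInstance ⇑a) :
    ∃ Y : Set X, #Y < τ ∧ AddSubgroup.closure (FreeAbelianGroup.of '' Yᶜ) ≤ a.ker := by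
  set T := ⨅ (Y : Set X) (_ : #Y < τ), TopologicalSpace.induced (f Y) inferInstance with hT
  have hnhds : @nhds _ T 0 =
      ⨅ (i : {Y : Set X // #Y < τ}), Filter.comap (f i.1) (nhds (0 : AddCircle (1:ℝ))) := by
    rw [hT, iInf_subtype', nhds_iInf]
    simp only [nhds_induced, map_zero]
  have h0 : Filter.Tendsto a (@nhds _ T 0) (nhds (0 : AddCircle (1:ℝ))) := by
    have := @Continuous.tendsto _ _ T _ _ ha 0
    rwa [map_zero] at this
  have hU : Metric.ball (0 : AddCircle (1:ℝ)) (1/3) ∈ nhds (0 : AddCircle (1:ℝ)) :=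
    Metric.ball_mem_nhds _ (by norm_num)
  have hmem : (⇑a) ⁻¹' Metric.ball 0 (1/3) ∈ @nhds _ T 0 := h0 hU
  rw [hnhds, Filter.mem_iInf] at hmem
  obtain ⟨I, hIfin, V, hV, hEq⟩ := hmem
  haveI := hIfin.to_subtype
  have hIcard : #I < τ := (Cardinal.lt_aleph0_of_finite I).trans hτ
  refine ⟨⋃ i : I, (i.1.1 : Set X), ?_, ?_⟩
  · exact lt_of_le_of_lt (Cardinal.mk_iUnion_le _)
      (Cardinal.mul_lt_of_lt hreg.aleph0_le hIcard
        (Cardinal.iSup_lt_of_isRegular hreg hIcard (fun i => i.1.2)))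
  · set Ya := ⋃ i : I, (i.1.1 : Set X) with hYa
    have hsub : ((AddSubgroup.closure (FreeAbelianGroup.of '' Yaᶜ)) : Set (FreeAbelianGroup X))
        ⊆ (⇑a) ⁻¹' Metric.ball 0 (1/3) := by
      rw [hEq]
      refine Set.subset_iInter fun i => ?_
      obtain ⟨W, hW, hWsub⟩ := Filter.mem_comap.mp (hV i)
      refine Set.Subset.trans (fun x hx => ?_) hWsub
      have hxk : x ∈ (f i.1.1).ker := by
        have hmono : AddSubgroup.closure (FreeAbelianGroup.of '' Yaᶜ) ≤
            AddSubgroup.closure (FreeAbelianGroup.of '' ((i.1.1 : Set X))ᶜ) :=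
          AddSubgroup.closure_mono (Set.image_mono (Set.compl_subset_compl.mpr
            (Set.subset_iUnion (fun j : I => ((j.1.1 : Set X))) i)))
        rw [hker i.1.1 i.1.2]
        exact hmono hx
      have hfx : f i.1.1 x = 0 := AddMonoidHom.mem_ker.mp hxk
      show f i.1.1 x ∈ W
      rw [hfx]
      exact mem_of_mem_nhds hW
    have hmap : ∀ y ∈ (AddSubgroup.closure (FreeAbelianGroup.of '' Yaᶜ)).map a, ‖y‖ < 1/3 := by
      rintro y ⟨x, hx, rfl⟩
      have := hsub hx
      simpa [mem_ball_zero_iff] using this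
    intro x hx
    exact AddMonoidHom.mem_ker.mpr (nss_third _ hmap (a x) ⟨x, hx, rfl⟩)

theorem statement_7 (τ : Cardinal.{u}) (hreg : τ.IsRegular) (hτ : ℵ₀ < τ)
    (hle : τ ≤ Order.succ Cardinal.continuum) (X : Type u) (hX : #X = τ)
    (f : Set X → (FreeAbelianGroup X →+ AddCircle (1 : ℝ)))
    (hker : ∀ Y : Set X, #Y < τ →
      (f Y).ker = AddSubgroup.closure (FreeAbelianGroup.of '' Yᶜ))
    (A : Set (FreeAbelianGroup X →+ AddCircle (1 : ℝ)))
    (hA : ∀ a ∈ A, @Continuous _ _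
      (⨅ (Y : Set X) (_ : #Y < τ), TopologicalSpace.induced (f Y) inferInstance)
      inferInstance ⇑a)
    (hAcard : #A < τ) :
    ∃ Y : Set X, #Y < τ ∧ ∀ a ∈ A,
      AddSubgroup.closure (FreeAbelianGroup.of '' Yᶜ) ≤ a.ker := by
  have key : ∀ a : A, ∃ Y : Set X, #Y < τ ∧
      AddSubgroup.closure (FreeAbelianGroup.of '' Yᶜ) ≤ (a : FreeAbelianGroup X →+ AddCircle (1:ℝ)).ker :=
    fun a => per_char τ hreg hτ f hker a (hA a a.2)
  choose g hg1 hg2 using key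
  refine ⟨⋃ a : A, g a, ?_, ?_⟩
  · exact lt_of_le_of_lt (Cardinal.mk_iUnion_le _)
      (Cardinal.mul_lt_of_lt hreg.aleph0_le hAcard
        (Cardinal.iSup_lt_of_isRegular hreg hAcard hg1))
  · intro a ha
    exact le_trans (AddSubgroup.closure_mono (Set.image_mono (Set.compl_subset_compl.mpr
      (Set.subset_iUnion g ⟨a, ha⟩)))) (hg2 ⟨a, ha⟩)
end

section
/- There exists a precompact abelian (Hausdorff) topological group G with uncountable pseudocharacter that is pseudo-𝔠-fine. -/
open Cardinal Topology Pointwise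

universe u

namespace Statement8Aux

open Cardinal Ordinal Filter Function

private instance : TopologicalSpace (ZMod 2) := ⊥
private instance : DiscreteTopology (ZMod 2) := ⟨rfl⟩

abbrev I : Type u := (Order.succ continuum.{u}).ord.ToType

lemma iio_small (i : I.{u}) : #(Set.Iio i) ≤ continuum.{u} := by
  have := Cardinal.mk_Iio_ord_toType i
  exact Order.lt_succ_iff.mp this

lemma bounded_small {A : Set I.{u}} (hA : #A ≤ continuum.{u}) :
    ∃ z : I.{u}, ∀ a ∈ A, a < z := by
  haveI : IsWellOrder I.{u} (· < ·) := isWellOrder_lt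
  have hreg : (Order.succ continuum.{u}).ord.cof = Order.succ continuum.{u} :=
    (Cardinal.isRegular_succ aleph0_le_continuum).cof_eq
  have : #A < Order.cof I.{u} := by
    rw [Ordinal.cof_toType, hreg]
    exact hA.trans_lt (Order.lt_succ _)
  by_contra hne
  push_neg at hne
  exact (Order.cof_le (s := A) hne).not_gt this

lemma exists_indep : ∃ (C : Type u) (b : C → ℕ → ZMod 2),
    LinearIndependent (ZMod 2) b ∧ continuum.{u} ≤ #C := by
  classical
  set W := (ℕ → ZMod 2) with hWdef
  have hW : #W = continuum.{0} := by
    rw [hWdef, Cardinal.mk_arrow]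
    simp [Cardinal.mk_fintype, Cardinal.mk_denumerable, Cardinal.two_power_aleph0]
  let B := Module.Basis.ofVectorSpace (ZMod 2) W
  set ι := Module.Basis.ofVectorSpaceIndex (ZMod 2) W with hι
  have hinf : Infinite ↥ι := by
    by_contra hfin
    have : Finite ↥ι := not_infinite_iff_finite.mp hfin
    have : Finite (↥ι →₀ ZMod 2) := Finite.of_equiv _ (Finsupp.equivFunOnFinite).symm
    have : Finite W := Finite.of_equiv _ B.repr.toEquiv.symm
    have := Cardinal.lt_aleph0_of_finite W
    rw [hW] at this
    exact absurd this (not_lt.mpr aleph0_le_continuum)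
  have hcard : continuum.{0} ≤ #↥ι := by
    have h1 : #W = #(↥ι →₀ ZMod 2) := Cardinal.mk_congr B.repr.toEquiv
    rw [Cardinal.mk_finsupp_of_infinite] at h1
    rw [hW] at h1
    rcases max_cases #↥ι #(ZMod 2) with ⟨he, _⟩ | ⟨he, hlt⟩
    · rw [he] at h1; exact h1.le
    · rw [he] at h1
      exfalso
      have : #(ZMod 2) < ℵ₀ := Cardinal.lt_aleph0_of_finite _
      rw [← h1] at this
      exact absurd this (not_lt.mpr aleph0_le_continuum)
  refine ⟨ULift.{u} ↥ι, fun c => B c.down, ?_, ?_⟩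
  · exact B.linearIndependent.comp _ (fun a b h => by
      cases a; cases b; simpa using h)
  · rw [Cardinal.mk_uLift, ← Cardinal.lift_continuum.{u, 0}]
    exact Cardinal.lift_le.mpr hcard

noncomputable def lmap {C : Type u} (b : C → ℕ → ZMod 2)
    (e : ∀ i : I.{u}, Set.Iio i ↪ C) (i : I.{u}) :
    (I.{u} →₀ ZMod 2) →ₗ[ZMod 2] (ℕ → ZMod 2) :=
  (Finsupp.linearCombination (ZMod 2) (fun j : Set.Iio i => b (e i j))).comp
    (Finsupp.lsubtypeDomain (Set.Iio i))

lemma lmap_apply {C : Type u} (b : C → ℕ → ZMod 2)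
    (e : ∀ i : I.{u}, Set.Iio i ↪ C) (i : I.{u}) (x : I.{u} →₀ ZMod 2) :
    lmap b e i x = Finsupp.linearCombination (ZMod 2) (fun j : Set.Iio i => b (e i j))
      (Finsupp.subtypeDomain (· ∈ Set.Iio i) x) := rfl

lemma lmap_eq_zero_of {C : Type u} (b : C → ℕ → ZMod 2)
    (e : ∀ i : I.{u}, Set.Iio i ↪ C) (i : I.{u}) (x : I.{u} →₀ ZMod 2)
    (hx : ∀ j < i, x j = 0) : lmap b e i x = 0 := by
  rw [lmap_apply]
  have h0 : Finsupp.subtypeDomain (· ∈ Set.Iio i) x = 0 := by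
    ext j
    exact hx j j.2
  rw [h0, map_zero]

lemma eq_zero_of_lmap {C : Type u} {b : C → ℕ → ZMod 2}
    (hb : LinearIndependent (ZMod 2) b)
    (e : ∀ i : I.{u}, Set.Iio i ↪ C) (i : I.{u}) (x : I.{u} →₀ ZMod 2)
    (hx : lmap b e i x = 0) : ∀ j < i, x j = 0 := by
  intro j hj
  have hind : LinearIndependent (ZMod 2) (b ∘ (e i)) := hb.comp _ (e i).injective
  have hinj : Function.Injective
      (Finsupp.linearCombination (ZMod 2) (b ∘ (e i))) := hind
  have h0 : Finsupp.subtypeDomain (· ∈ Set.Iio i) x = 0 := by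
    apply hinj
    rw [map_zero]
    exact hx
  have := DFunLike.congr_fun h0 (⟨j, hj⟩ : Set.Iio i)
  simpa using this

set_option maxHeartbeats 1000000 in
theorem main : ∃ (G : Type u) (_ : TopologicalSpace G) (_ : CommGroup G)
    (_ : IsTopologicalGroup G) (_ : T2Space G),
    PrecompactGroup G ∧ ℵ₀ < psi G ∧ IsPseudoTauFine Cardinal.continuum G := by
  classical
  obtain ⟨C, b, hb, hC⟩ := exists_indep.{u}
  have he : ∀ i : I.{u}, Nonempty (Set.Iio i ↪ C) := fun i =>
    (Cardinal.le_def _ _).mp ((iio_small i).trans hC)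
  let e : ∀ i : I.{u}, Set.Iio i ↪ C := fun i => (he i).some
  let V : Type u := I.{u} →₀ ZMod 2
  let Φ : V →+ ((I.{u} × ℕ) → ZMod 2) :=
    { toFun := fun x p => lmap b e p.1 x p.2
      map_zero' := by funext p; simp
      map_add' := by intro x y; funext p; simp }
  have hΦ : ∀ (x : V) (p : I.{u} × ℕ), Φ x p = lmap b e p.1 x p.2 := fun _ _ => rfl
  letI tV : TopologicalSpace V := TopologicalSpace.induced Φ inferInstance
  haveI : IsTopologicalAddGroup V := topologicalAddGroup_induced Φ
  haveI : NoMaxOrder I.{u} := Cardinal.noMaxOrder (aleph0_le_continuum.trans (Order.le_succ _))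
  -- injectivity of Φ
  have hker : ∀ x : V, Φ x = 0 → x = 0 := by
    intro x hx
    ext j
    obtain ⟨i, hi⟩ := exists_gt j
    have hz : lmap b e i x = 0 := by
      funext n
      have := congrFun hx (i, n)
      simpa [hΦ] using this
    exact eq_zero_of_lmap hb e i x hz j hi
  have hinj : Function.Injective Φ := by
    intro x y hxy
    have : x - y = 0 := hker _ (by rw [map_sub, hxy, _root_.sub_self])
    exact sub_eq_zero.mp this
  haveI : T2Space V := by
    have hemb : Topology.IsEmbedding Φ := ⟨⟨rfl⟩, hinj⟩
    exact hemb.t2Space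
  -- neighbourhoods of 0 contain cylinders
  have hnhd : ∀ U : Set V, U ∈ 𝓝 (0 : V) →
      ∃ F : Finset (I.{u} × ℕ), {x : V | ∀ p ∈ F, Φ x p = 0} ⊆ U := by
    intro U hU
    rw [nhds_induced] at hU
    obtain ⟨W, hW, hWU⟩ := hU
    rw [map_zero, nhds_pi, Filter.mem_pi] at hW
    obtain ⟨J, hJfin, t, ht, hsub⟩ := hW
    refine ⟨hJfin.toFinset, fun x hx => hWU ?_⟩
    apply hsub
    intro p hp
    have h0 : Φ x p = 0 := hx p (hJfin.mem_toFinset.mpr hp)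
    rw [h0]
    have := ht p
    have h00 : (0 : (I.{u} × ℕ) → ZMod 2) p = 0 := rfl
    rw [h00] at this
    exact mem_of_mem_nhds this
  -- cylinders are neighbourhoods of 0
  have hcyl : ∀ F : Finset (I.{u} × ℕ), {x : V | ∀ p ∈ F, Φ x p = 0} ∈ 𝓝 (0 : V) := by
    intro F
    have hopen : IsOpen {x : V | ∀ p ∈ F, Φ x p = 0} := by
      have hEq : {x : V | ∀ p ∈ F, Φ x p = 0} = ⋂ p ∈ F, (fun x : V => Φ x) ⁻¹' {y | y p = 0} := by
        ext x; simp [Set.mem_iInter]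
      rw [hEq]
      refine isOpen_biInter_finset (fun p _ => ?_)
      have hc : Continuous (fun x : V => Φ x) := continuous_induced_dom
      have : IsOpen {y : (I.{u} × ℕ) → ZMod 2 | y p = 0} :=
        (continuous_apply p).isOpen_preimage {0} (isOpen_discrete _)
      exact this.preimage hc
    exact hopen.mem_nhds (by simp)
  haveI : T2Space (Multiplicative V) := inferInstanceAs (T2Space V)
  refine ⟨Multiplicative V, inferInstance, inferInstance, inferInstance,
    inferInstanceAs (T2Space V), ?_, ?_, ?_⟩
  · -- precompact
    intro U hU
    obtain ⟨F, hF⟩ := hnhd U hU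
    let q : V → (F → ZMod 2) := fun x p => Φ x p.1
    have hq : ∀ x y : V, q (x - y) = q x - q y := by
      intro x y; funext p; simp [q, map_sub]
    let rep : (F → ZMod 2) → V := fun v => if h : ∃ x : V, q x = v then h.choose else 0
    refine ⟨Finset.univ.image (fun v : F → ZMod 2 => (Multiplicative.ofAdd (rep v) : Multiplicative V)), fun x _ => ?_⟩
    have hex : ∃ y : V, q y = q x.toAdd := ⟨x.toAdd, rfl⟩
    have hrep : q (rep (q x.toAdd)) = q x.toAdd := by
      simp only [rep, dif_pos hex]
      exact hex.choose_spec
    refine Set.mem_iUnion₂.mpr ⟨Multiplicative.ofAdd (rep (q x.toAdd)), Finset.mem_image_of_mem _ (Finset.mem_univ _), ?_⟩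
    refine Set.mem_smul_set.mpr ⟨Multiplicative.ofAdd (x.toAdd - rep (q x.toAdd)), ?_, ?_⟩
    · apply hF
      intro p hp
      have h2 : q (x.toAdd - rep (q x.toAdd)) = 0 := by
        rw [hq, hrep, _root_.sub_self]
      exact congrFun h2 ⟨p, hp⟩
    · show Multiplicative.ofAdd (rep (q x.toAdd)) * Multiplicative.ofAdd (x.toAdd - rep (q x.toAdd)) = x
      rw [← ofAdd_add]
      simp
  · -- uncountable pseudocharacter
    unfold psi psiAt
    have hne : {c | ∃ S : Set (Set (Multiplicative V)),
        (∀ U ∈ S, IsOpen U ∧ (1 : Multiplicative V) ∈ U) ∧ ⋂₀ S = {1} ∧ #S = c}.Nonempty := by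
      refine ⟨_, {U : Set (Multiplicative V) | IsOpen U ∧ (1 : Multiplicative V) ∈ U},
        fun U hU => hU, ?_, rfl⟩
      ext w
      simp only [Set.mem_sInter, Set.mem_setOf_eq, Set.mem_singleton_iff]
      constructor
      · intro hw
        by_contra hw1
        obtain ⟨Uo, Vo, hUo, hVo, h1U, hwV, hdUV⟩ := t2_separation (Ne.symm hw1)
        exact Set.disjoint_left.mp hdUV (hw Uo ⟨hUo, h1U⟩) hwV
      · rintro rfl U ⟨_, h1⟩; exact h1
    have hbig : ∀ c ∈ {c | ∃ S : Set (Set (Multiplicative V)),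
        (∀ U ∈ S, IsOpen U ∧ (1 : Multiplicative V) ∈ U) ∧ ⋂₀ S = {1} ∧ #S = c}, ℵ₀ < c := by
      rintro c ⟨S, hSopen, hSint, rfl⟩
      by_contra hc
      haveI hcount : Countable ↥S := Cardinal.mk_le_aleph0_iff.mp (not_lt.mp hc)
      have hF := fun (U : ↥S) => hnhd U.1 ((hSopen U U.2).1.mem_nhds (hSopen U U.2).2)
      choose Fs hFs using hF
      have hA : #(⋃ U : ↥S, ((Fs U).image Prod.fst : Finset I.{u}) : Set I.{u})
          ≤ continuum.{u} := by
        have hcnt : (⋃ U : ↥S, ((Fs U).image Prod.fst : Finset I.{u}) : Set I.{u}).Countable :=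
          Set.countable_iUnion (fun U => Finset.countable_toSet _)
        exact hcnt.le_aleph0.trans aleph0_le_continuum
      obtain ⟨z, hz⟩ := bounded_small hA
      have hx0mem : ∀ U ∈ S, (Multiplicative.ofAdd (Finsupp.single z 1 : V)) ∈ U := by
        intro U hU
        apply hFs ⟨U, hU⟩
        intro p hp
        have hmem : p.1 ∈ ((Fs ⟨U, hU⟩).image Prod.fst : Finset I.{u}) :=
          Finset.mem_image_of_mem _ hp
        have hpz : p.1 < z := hz p.1 (Set.mem_iUnion.mpr ⟨⟨U, hU⟩, hmem⟩)
        have h0 : lmap b e p.1 (Finsupp.single z 1 : V) = 0 :=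
          lmap_eq_zero_of b e p.1 _ (fun j hj =>
            Finsupp.single_eq_of_ne' (fun hzj => absurd (hzj ▸ (hj.trans hpz)) (lt_irrefl _)))
        refine (hΦ _ p).trans ?_
        exact congrFun h0 p.2
      have hx1 : (Multiplicative.ofAdd (Finsupp.single z 1 : V)) ∈ ({1} : Set (Multiplicative V)) :=
        hSint ▸ Set.mem_sInter.mpr hx0mem
      have hx2 : (Finsupp.single z 1 : V) = 0 := Set.mem_singleton_iff.mp hx1
      have := DFunLike.congr_fun hx2 z
      simp [Finsupp.single_eq_same] at this
    exact hbig _ (csInf_mem hne)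
  · -- pseudo-continuum-fine
    intro ι Us hι hUs
    choose Fs hFs using fun i => hnhd (Us i) (hUs i)
    have hA : #(⋃ i, ((Fs i).image Prod.fst : Finset I.{u}) : Set I.{u}) ≤ continuum.{u} := by
      calc #(⋃ i, ((Fs i).image Prod.fst : Finset I.{u}) : Set I.{u})
          ≤ Cardinal.sum (fun i => #(((Fs i).image Prod.fst : Finset I.{u}) : Set I.{u})) :=
            Cardinal.mk_iUnion_le_sum_mk
        _ ≤ Cardinal.sum (fun _ : ι => ℵ₀) :=
            Cardinal.sum_le_sum _ _ (fun i => (Cardinal.lt_aleph0_of_finite _).le)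
        _ = #ι * ℵ₀ := Cardinal.sum_const' ι ℵ₀
        _ ≤ continuum.{u} * continuum.{u} := mul_le_mul' hι aleph0_le_continuum
        _ = continuum.{u} := Cardinal.mul_eq_self aleph0_le_continuum
    obtain ⟨z, hz⟩ := bounded_small hA
    refine ⟨fun n => {x : V | Φ x (z, n) = 0}, fun n => ?_, ?_⟩
    · exact Filter.mem_of_superset (hcyl {(z, n)})
        (fun x hx => hx (z, n) (Finset.mem_singleton_self _))
    · intro x hx
      have hz0 : lmap b e z (Multiplicative.toAdd x) = 0 :=
        funext fun n => Set.mem_iInter.mp hx n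
      have hvan : ∀ j < z, (Multiplicative.toAdd x) j = 0 := eq_zero_of_lmap hb e z _ hz0
      refine Set.mem_iInter.mpr fun i => ?_
      apply hFs i
      intro p hp
      have hpz : p.1 < z := hz p.1 (Set.mem_iUnion.mpr ⟨i, Finset.mem_image_of_mem _ hp⟩)
      have h0 : lmap b e p.1 (Multiplicative.toAdd x) = 0 :=
        lmap_eq_zero_of b e p.1 _ (fun j hj => hvan j (hj.trans hpz))
      refine (hΦ _ p).trans ?_
      exact congrFun h0 p.2

end Statement8Aux


theorem statement_8 :
    ∃ (G : Type u) (_ : TopologicalSpace G) (_ : CommGroup G) (_ : IsTopologicalGroup G)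
      (_ : T2Space G), PrecompactGroup G ∧ ℵ₀ < psi G ∧
        IsPseudoTauFine Cardinal.continuum G :=
  Statement8Aux.main
end

section
/- Let G be a pseudocompact topological group and K its Weil completion (so K is a compact group in which G is G_δ-dense). Then the map M ↦ M ∩ G is a bijection between the set of co-Lie subgroups of K and the set of co-Lie subgroups of G; in particular cL(G) = cL(K). -/
open Cardinal Topology Pointwise

universe u

section LieTransfer

variable {L L' : Type*} [TopologicalSpace L] [Group L] [TopologicalSpace L'] [Group L']

lemma isLieGroupTop_of_mulEquiv (e : L ≃* L') (hec : Continuous e)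
    (hesc : Continuous e.symm) (hl : IsLieGroupTop L) : IsLieGroupTop L' := by
  classical
  obtain ⟨n, cs, lie⟩ := hl
  haveI := lie
  set E := EuclideanSpace ℝ (Fin n) with hE
  set I := modelWithCornersSelf ℝ E with hI
  let F : L' ≃ₜ L :=
    { toEquiv := e.symm.toEquiv, continuous_toFun := hesc, continuous_invFun := hec }
  let P : OpenPartialHomeomorph L' L := F.toOpenPartialHomeomorph
  have hPcoe : ⇑P = ⇑F := rfl
  have hPsymm : ⇑P.symm = ⇑F.symm := rfl
  have hPsource : P.source = Set.univ := rfl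
  have hPtarget : P.target = Set.univ := rfl
  have hP1 : ∀ w : L, P (P.symm w) = w := fun w => F.apply_symm_apply w
  have hP2 : ∀ w : L, F (P.symm w) = w := fun w => F.apply_symm_apply w
  have hP4 : ∀ w : L, P (F.symm w) = w := fun w => F.apply_symm_apply w
  letI cs' : ChartedSpace E L' :=
    { atlas := {f | ∃ g ∈ ChartedSpace.atlas (H := E) (M := L), f = P.trans g}
      chartAt := fun x => P.trans (chartAt E (F x))
      mem_chart_source := fun x => by
        simp only [OpenPartialHomeomorph.trans_source, Set.mem_inter_iff, Set.mem_preimage]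
        exact ⟨trivial, mem_chart_source E (F x)⟩
      chart_mem_atlas := fun x => ⟨_, chart_mem_atlas E (F x), rfl⟩ }
  have hchart : ∀ x : L', chartAt E x = P.trans (chartAt E (F x)) := fun _ => rfl
  have hEq : ∀ g g' : OpenPartialHomeomorph L E,
      (P.trans g).symm.trans (P.trans g') ≈ g.symm.trans g' := by
    intro g g'
    constructor
    · ext z
      simp [OpenPartialHomeomorph.trans_source, OpenPartialHomeomorph.trans_target,
        hPsource, hPtarget, hPsymm, hPcoe]
    · intro z hz
      simp [OpenPartialHomeomorph.trans_apply, hP1]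
  haveI mfd' : @IsManifold ℝ _ E _ _ E _ I (⊤ : ℕ∞) L' _ cs' :=
    { compatible := by
        rintro f f' ⟨g, hg, rfl⟩ ⟨g', hg', rfl⟩
        have base : g.symm.trans g' ∈ contDiffGroupoid (⊤ : ℕ∞) I :=
          StructureGroupoid.compatible _ hg hg'
        exact (contDiffGroupoid (⊤ : ℕ∞) I).mem_of_eqOnSource base (hEq g g') }
  have hF : ContMDiff I I (⊤ : ℕ∞) (⇑F : L' → L) := by
    rw [contMDiff_iff]
    refine ⟨F.continuous, fun x y => ?_⟩
    have base := (contMDiff_iff.mp (contMDiff_id (I := I) (M := L) (n := (⊤ : ℕ∞)))).2 (F x) y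
    have hset : ((extChartAt I x).target ∩
        (extChartAt I x).symm ⁻¹' (⇑F ⁻¹' (extChartAt I y).source))
        = ((extChartAt I (F x)).target ∩
        (extChartAt I (F x)).symm ⁻¹' (id ⁻¹' (extChartAt I y).source)) := by
      ext z
      simp [hchart, extChartAt, OpenPartialHomeomorph.extend, OpenPartialHomeomorph.trans_target,
        hPsource, hPtarget, hPsymm, hPcoe, hI]
    rw [hset]
    refine base.congr fun z hz => ?_
    simp [hchart, extChartAt, OpenPartialHomeomorph.extend, hP1, hP2, hP4, hI]
  have hFsymm : ContMDiff I I (⊤ : ℕ∞) (⇑F.symm : L → L') := by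
    rw [contMDiff_iff]
    refine ⟨F.symm.continuous, fun x y => ?_⟩
    have base := (contMDiff_iff.mp (contMDiff_id (I := I) (M := L) (n := (⊤ : ℕ∞)))).2 x (F y)
    have hset : ((extChartAt I x).target ∩
        (extChartAt I x).symm ⁻¹' (⇑F.symm ⁻¹' (extChartAt I y).source))
        = ((extChartAt I x).target ∩
        (extChartAt I x).symm ⁻¹' (id ⁻¹' (extChartAt I (F y)).source)) := by
      ext z
      simp [hchart, extChartAt, OpenPartialHomeomorph.extend, OpenPartialHomeomorph.trans_source,
        hPsource, hPtarget, hPsymm, hPcoe, hI]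
    rw [hset]
    refine base.congr fun z hz => ?_
    simp [hchart, extChartAt, OpenPartialHomeomorph.extend, hP1, hP2, hP4, hI]
  have hmul : ContMDiff (I.prod I) I (⊤ : ℕ∞) (fun p : L' × L' => p.1 * p.2) := by
    have heq : (fun p : L' × L' => p.1 * p.2)
        = ⇑F.symm ∘ (fun q : L × L => q.1 * q.2) ∘ (Prod.map ⇑F ⇑F) := by
      ext p
      show p.1 * p.2 = e (e.symm p.1 * e.symm p.2)
      rw [← map_mul, MulEquiv.apply_symm_apply]
    rw [heq]
    exact hFsymm.comp (ContMDiffMul.contMDiff_mul.comp (hF.prodMap hF))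
  have hinv : ContMDiff I I (⊤ : ℕ∞) (fun a : L' => a⁻¹) := by
    have heq : (fun a : L' => a⁻¹) = ⇑F.symm ∘ (fun b : L => b⁻¹) ∘ ⇑F := by
      ext a
      show a⁻¹ = e (e.symm a)⁻¹
      rw [← map_inv, MulEquiv.apply_symm_apply]
    rw [heq]
    exact hFsymm.comp (LieGroup.contMDiff_inv.comp hF)
  exact ⟨n, cs', { toIsManifold := mfd', contMDiff_mul := hmul, contMDiff_inv := hinv }⟩

end LieTransfer

section Helpers

open Filter

lemma pseudocompact_of_surj {X Y : Type*} [TopologicalSpace X] [TopologicalSpace Y]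
    {f : X → Y} (hf : Continuous f) (hsurj : Function.Surjective f) (h : Pseudocompact X) :
    Pseudocompact Y := fun g hg =>
  (h (g ∘ f) (hg.comp hf)).imp fun C hC y => by obtain ⟨x, rfl⟩ := hsurj y; exact hC x

lemma pseudocompact_compactSpace_of_metrizable {X : Type*} [TopologicalSpace X]
    [TopologicalSpace.MetrizableSpace X] (h : Pseudocompact X) : CompactSpace X := by
  letI : MetricSpace X := TopologicalSpace.metrizableSpaceMetric X
  rw [compactSpace_iff_seqCompactSpace]
  refine ⟨?_⟩
  intro u _
  suffices hcl : ∃ x, MapClusterPt x atTop u by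
    obtain ⟨x, hx⟩ := hcl
    obtain ⟨ψ, hψ, hts⟩ := TopologicalSpace.FirstCountableTopology.tendsto_subseq hx
    exact ⟨x, Set.mem_univ x, ψ, hψ, hts⟩
  by_contra hno
  push_neg at hno
  set S := Set.range u with hS
  have hfin : ∀ x : X, ∃ s, IsOpen s ∧ x ∈ s ∧ {n | u n ∈ s}.Finite := by
    intro x
    have h1 := hno x
    rw [mapClusterPt_iff_frequently] at h1
    push_neg at h1
    obtain ⟨s, hs, hev⟩ := h1
    obtain ⟨t, hts, hto, hxt⟩ := mem_nhds_iff.mp hs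
    obtain ⟨N, hN⟩ := Filter.eventually_atTop.mp hev
    refine ⟨t, hto, hxt, (Set.finite_Iio N).subset fun n hn => ?_⟩
    exact lt_of_not_ge fun hge => hN n hge (hts hn)
  have hSs : ∀ (s : Set X), ({n | u n ∈ s}).Finite → (S ∩ s).Finite := by
    intro s hs
    refine (hs.image u).subset ?_
    rintro y ⟨⟨n, rfl⟩, hys⟩
    exact ⟨n, hys, rfl⟩
  have hSclosed : IsClosed S := by
    refine isClosed_of_closure_subset fun x hx => ?_
    obtain ⟨s, hso, hxs, hsf⟩ := hfin x
    have h1 : x ∈ closure (S ∩ s) := by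
      rw [mem_closure_iff] at hx ⊢
      intro o ho hxo
      obtain ⟨y, hy1, hy2⟩ := hx (o ∩ s) (ho.inter hso) ⟨hxo, hxs⟩
      exact ⟨y, hy1.1, hy2, hy1.2⟩
    have h2 : x ∈ S ∩ s := by
      rw [← (hSs s hsf).isClosed.closure_eq]
      exact h1
    exact h2.1
  have hfib : ∀ y, {n | u n = y}.Finite := by
    intro y
    by_contra hinf
    apply hno y
    rw [mapClusterPt_iff_frequently]
    intro s hs
    rw [Nat.frequently_atTop_iff_infinite]
    have hinf' : {n | u n = y}.Infinite := hinf
    refine hinf'.mono fun n hn => ?_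
    rw [Set.mem_setOf_eq] at hn ⊢
    rw [hn]
    exact mem_of_mem_nhds hs
  have hSinf : S.Infinite := by
    intro hfi
    have huniv : (Set.univ : Set ℕ) = ⋃ y ∈ S, {n | u n = y} := by
      ext n
      simp only [Set.mem_univ, true_iff, Set.mem_iUnion]
      exact ⟨u n, ⟨n, rfl⟩, rfl⟩
    exact Set.infinite_univ (huniv ▸ hfi.biUnion fun y _ => hfib y)
  haveI hdisc : DiscreteTopology ↥S := by
    rw [discreteTopology_iff_isOpen_singleton]
    rintro ⟨x, hxS⟩
    obtain ⟨s, hso, hxs, hsf⟩ := hfin x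
    have hF : ((S ∩ s) \ {x}).Finite := (hSs s hsf).diff
    have ho : IsOpen (s ∩ ((S ∩ s) \ {x})ᶜ) := hso.inter hF.isClosed.isOpen_compl
    have : (Subtype.val ⁻¹' (s ∩ ((S ∩ s) \ {x})ᶜ) : Set ↥S) = {⟨x, hxS⟩} := by
      ext b
      simp only [Set.mem_preimage, Set.mem_inter_iff, Set.mem_compl_iff, Set.mem_diff,
        Set.mem_singleton_iff, not_and, not_not]
      constructor
      · rintro ⟨hbs, hb2⟩
        exact Subtype.ext (hb2 ⟨b.2, hbs⟩)
      · rintro rfl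
        exact ⟨hxs, fun _ => rfl⟩
    rw [← this]
    exact ho.preimage continuous_subtype_val
  set f := hSinf.natEmbedding S with hf
  let g : C(↥S, ℝ) := ⟨fun z => ((Function.invFun ⇑f z : ℕ) : ℝ), continuous_of_discreteTopology⟩
  obtain ⟨Fc, hFc⟩ := ContinuousMap.exists_restrict_eq hSclosed g
  obtain ⟨C, hC⟩ := h Fc Fc.continuous
  obtain ⟨m, hm⟩ := exists_nat_gt C
  have hval : Fc ((f m : ↥S) : X) = m := by
    have h1 := DFunLike.congr_fun hFc (f m)
    have h2 : g (f m) = m := by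
      show ((Function.invFun ⇑f (f m) : ℕ) : ℝ) = m
      rw [Function.leftInverse_invFun f.injective m]
    rw [← h2]
    exact h1
  have := hC ((f m : ↥S) : X)
  rw [hval] at this
  have := (abs_le.mp this).2
  linarith

lemma isLieGroupTop_gdelta_one {L : Type*} [TopologicalSpace L] [Group L]
    (hl : IsLieGroupTop L) : ∃ U : ℕ → Set L, (∀ k, IsOpen (U k)) ∧ (⋂ k, U k) = {1} := by
  obtain ⟨n, cs, _⟩ := hl
  set E := EuclideanSpace ℝ (Fin n) with hE
  set c := chartAt E (1 : L) with hc
  refine ⟨fun k => c.source ∩ c ⁻¹' Metric.ball (c 1) (1 / (k + 1)), fun k => ?_, ?_⟩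
  · exact c.continuousOn.isOpen_inter_preimage c.open_source Metric.isOpen_ball
  · ext x
    simp only [Set.mem_iInter, Set.mem_inter_iff, Set.mem_preimage, Metric.mem_ball,
      Set.mem_singleton_iff]
    constructor
    · intro hx
      have hxs : x ∈ c.source := (hx 0).1
      have hd : dist (c x) (c 1) = 0 := by
        by_contra hne
        obtain ⟨k, hk⟩ := exists_nat_one_div_lt (lt_of_le_of_ne dist_nonneg (Ne.symm hne))
        exact absurd (hx k).2 (not_lt.mpr hk.le)
      rw [dist_eq_zero] at hd
      exact c.injOn hxs (mem_chart_source E 1) hd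
    · rintro rfl k
      refine ⟨mem_chart_source E 1, ?_⟩
      rw [dist_self]
      positivity

lemma isLieGroupTop_compactSpace {L : Type*} [TopologicalSpace L] [Group L]
    [IsTopologicalGroup L] [T2Space L] (hl : IsLieGroupTop L) (hp : Pseudocompact L) :
    CompactSpace L := by
  obtain ⟨n, cs, _⟩ := hl
  haveI : FirstCountableTopology L := by
    constructor
    intro x
    set c := chartAt (EuclideanSpace ℝ (Fin n)) x with hc
    have hx := mem_chart_source (EuclideanSpace ℝ (Fin n)) x
    have h1 : Filter.map (⇑c.symm) (𝓝 (c x)) = 𝓝 x := by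
      have h2 := c.symm.map_nhds_eq (x := c x) (by simpa using c.map_source hx)
      rwa [c.left_inv hx] at h2
    rw [← h1]
    infer_instance
  letI : UniformSpace L := IsTopologicalGroup.rightUniformSpace L
  haveI : Filter.IsCountablyGenerated (uniformity L) := by
    rw [uniformity_eq_comap_nhds_one']
    infer_instance
  haveI : TopologicalSpace.MetrizableSpace L := UniformSpace.metrizableSpace
  exact pseudocompact_compactSpace_of_metrizable hp

end Helpers


theorem statement_12 (K : Type u) [TopologicalSpace K] [Group K] [IsTopologicalGroup K] [T2Space K]
    [CompactSpace K] (G : Subgroup K) (hd : Dense (G : Set K))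
    (hGdelta : ∀ P : Set K, (∃ U : ℕ → Set K, (∀ n, IsOpen (U n)) ∧ P = ⋂ n, U n) →
      P.Nonempty → (P ∩ G).Nonempty)
    (hpc : Pseudocompact ↥G) :
    Set.BijOn (fun M : Subgroup K => M.comap G.subtype) (coLieSubgroups K)
      (coLieSubgroups ↥G) ∧ cL ↥G = cL K := by
  classical
  have key1 : ∀ M ∈ coLieSubgroups K, ∃ V : ℕ → Set K,
      (∀ k, IsOpen (V k)) ∧ (M : Set K) = ⋂ k, V k := by
    rintro M ⟨hMcl, hMnorm, hMlie⟩
    haveI := hMnorm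
    obtain ⟨U, hUopen, hU1⟩ := isLieGroupTop_gdelta_one hMlie
    refine ⟨fun k => (QuotientGroup.mk : K → K ⧸ M) ⁻¹' U k,
      fun k => (hUopen k).preimage QuotientGroup.continuous_mk, ?_⟩
    ext x
    simp only [Set.mem_iInter, Set.mem_preimage, SetLike.mem_coe]
    rw [← QuotientGroup.eq_one_iff, ← Set.mem_singleton_iff, ← hU1, Set.mem_iInter]
  have key2 : ∀ M ∈ coLieSubgroups K, ∀ (k : K) (V : Set K), IsOpen V → k ∈ V →
      ∃ g : K, g ∈ G ∧ g ∈ V ∧ (QuotientGroup.mk g : K ⧸ M) = QuotientGroup.mk k := by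
    intro M hM k V hV hkV
    obtain ⟨W, hWopen, hMW⟩ := key1 M hM
    have hcont : Continuous fun x : K => x⁻¹ * k := continuous_inv.mul continuous_const
    obtain ⟨g, hgP, hgG⟩ := hGdelta ((fun x : K => x⁻¹ * k) ⁻¹' (M : Set K) ∩ V)
      ⟨fun n => (fun x : K => x⁻¹ * k) ⁻¹' W n ∩ V, fun n => ((hWopen n).preimage hcont).inter hV,
        by rw [← Set.iInter_inter, ← Set.preimage_iInter, ← hMW]⟩
      ⟨k, by simpa using one_mem M, hkV⟩
    exact ⟨g, hgG, hgP.2, (QuotientGroup.eq).mpr hgP.1⟩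
  -- a co-Lie subgroup of K is the closure of its trace on G
  have hsetM : ∀ M ∈ coLieSubgroups K, (M : Set K) = closure ((G : Set K) ∩ M) := by
    intro M hM
    refine Set.Subset.antisymm (fun m hm => ?_) ?_
    · rw [mem_closure_iff]
      intro o ho hmo
      obtain ⟨g, hgG, hgo, hgk⟩ := key2 M hM m o ho hmo
      have hgM : g ∈ M := by
        have h1 := (QuotientGroup.eq).mp hgk
        have h2 : m * (g⁻¹ * m)⁻¹ = g := by group
        exact h2 ▸ mul_mem hm (inv_mem h1)
      exact ⟨g, hgo, hgG, hgM⟩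
    · exact closure_minimal Set.inter_subset_right hM.1
  -- the forward map is well-defined
  have hMapsTo : ∀ M ∈ coLieSubgroups K, M.comap G.subtype ∈ coLieSubgroups ↥G := by
    intro M hM
    obtain ⟨hMcl, hMnorm, hMlie⟩ := hM
    haveI := hMnorm
    have hMG : ((M.comap G.subtype : Subgroup ↥G) : Set ↥G) = Subtype.val ⁻¹' (M : Set K) := rfl
    refine ⟨hMG ▸ hMcl.preimage continuous_subtype_val, hMnorm.comap _, ?_⟩
    set N := M.comap G.subtype with hN
    haveI : N.Normal := hMnorm.comap _
    set ψ := (QuotientGroup.mk' M).comp G.subtype with hψ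
    have hker : ∀ g : ↥G, ψ g = 1 ↔ g ∈ N := by
      intro g
      rw [hψ]
      simp only [MonoidHom.comp_apply, QuotientGroup.mk'_apply, Subgroup.coe_subtype]
      rw [QuotientGroup.eq_one_iff, hN, Subgroup.mem_comap]
      rfl
    set j := QuotientGroup.lift N ψ (fun g hg => (hker g).mpr hg) with hj
    have hjmk : ∀ g : ↥G, j (QuotientGroup.mk g) = QuotientGroup.mk (g : K) := fun g => rfl
    have hjc : Continuous j := by
      rw [(QuotientGroup.isQuotientMap_mk N).continuous_iff]
      exact QuotientGroup.continuous_mk.comp continuous_subtype_val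
    have hjinj : Function.Injective j := by
      rw [injective_iff_map_eq_one]
      intro a ha
      obtain ⟨g, rfl⟩ := QuotientGroup.mk_surjective a
      rw [hjmk] at ha
      rw [QuotientGroup.eq_one_iff]
      rw [← hker g]
      exact ha
    have hjsurj : Function.Surjective j := by
      intro q
      obtain ⟨k, rfl⟩ := QuotientGroup.mk_surjective q
      obtain ⟨g, hgG, _, hgk⟩ := key2 M ⟨hMcl, hMnorm, hMlie⟩ k Set.univ isOpen_univ trivial
      exact ⟨QuotientGroup.mk ⟨g, hgG⟩, hgk⟩
    have hjopen : IsOpenMap j := by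
      intro O hO
      have hU : IsOpen ((QuotientGroup.mk : ↥G → ↥G ⧸ N) ⁻¹' O) :=
        hO.preimage QuotientGroup.continuous_mk
      obtain ⟨V', hV', hV'eq⟩ := isOpen_induced_iff.mp hU
      have him : j '' O = (QuotientGroup.mk : K → K ⧸ M) '' V' := by
        refine Set.Subset.antisymm ?_ ?_
        · rintro _ ⟨q, hqO, rfl⟩
          obtain ⟨g, rfl⟩ := QuotientGroup.mk_surjective q
          have hgV : (g : K) ∈ V' := by
            have : g ∈ Subtype.val ⁻¹' V' := by rw [hV'eq]; exact hqO
            exact this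
          exact ⟨(g : K), hgV, (hjmk g).symm⟩
        · rintro _ ⟨v, hvV', rfl⟩
          obtain ⟨g, hgG, hgV', hgk⟩ := key2 M ⟨hMcl, hMnorm, hMlie⟩ v V' hV' hvV'
          refine ⟨QuotientGroup.mk (⟨g, hgG⟩ : ↥G), ?_, ?_⟩
          · have h3 : (⟨g, hgG⟩ : ↥G) ∈ Subtype.val ⁻¹' V' := hgV'
            rw [hV'eq] at h3
            exact h3
          · rw [hjmk]; exact hgk
      rw [him]
      exact QuotientGroup.isOpenMap_coe V' hV'
    set e := MulEquiv.ofBijective j ⟨hjinj, hjsurj⟩ with he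
    have hcoe : ⇑e.toEquiv = ⇑j := rfl
    have hc1 : Continuous ⇑e.symm := by
      rw [← MulEquiv.coe_toEquiv_symm]
      exact (Equiv.toHomeomorphOfContinuousOpen e.toEquiv (hcoe ▸ hjc)
        (hcoe ▸ hjopen)).symm.continuous
    have hc2 : Continuous ⇑e.symm.symm := by
      rw [MulEquiv.symm_symm]
      exact hjc
    exact isLieGroupTop_of_mulEquiv e.symm hc1 hc2 hMlie
  have hInjOn : Set.InjOn (fun M : Subgroup K => M.comap G.subtype) (coLieSubgroups K) := by
    intro M₁ h₁ M₂ h₂ heq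
    have himg : ∀ Mx : Subgroup K,
        Subtype.val '' ((Subtype.val ⁻¹' (Mx : Set K)) : Set ↥G) = (G : Set K) ∩ Mx := by
      intro Mx
      ext y
      constructor
      · rintro ⟨x, hx, rfl⟩; exact ⟨x.2, hx⟩
      · rintro ⟨hyG, hyM⟩; exact ⟨⟨y, hyG⟩, hyM, rfl⟩
    have hh : (G : Set K) ∩ M₁ = (G : Set K) ∩ M₂ := by
      rw [← himg M₁, ← himg M₂]
      have h0 : (Subtype.val ⁻¹' (M₁ : Set K) : Set ↥G) = Subtype.val ⁻¹' (M₂ : Set K) := by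
        have h1 := congrArg (fun (N : Subgroup ↥G) => (N : Set ↥G)) heq
        simpa only [Subgroup.coe_comap, Subgroup.coe_subtype] using h1
      rw [h0]
    refine SetLike.ext' ?_
    rw [hsetM M₁ h₁, hsetM M₂ h₂, hh]
  have hSurjOn : Set.SurjOn (fun M : Subgroup K => M.comap G.subtype) (coLieSubgroups K)
      (coLieSubgroups ↥G) := by
    intro N hN
    obtain ⟨hNcl, hNnorm, hNlie⟩ := hN
    haveI := hNnorm
    haveI : IsClosed (N : Set ↥G) := hNcl
    set M := (N.map G.subtype).topologicalClosure with hM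
    have hMcl : IsClosed (M : Set K) := Subgroup.isClosed_topologicalClosure _
    have hMset : (M : Set K) = closure (Subtype.val '' (N : Set ↥G)) := by
      rw [hM, Subgroup.topologicalClosure_coe, Subgroup.coe_map, Subgroup.coe_subtype]
    have hφM : M.comap G.subtype = N := by
      ext x
      rw [Subgroup.mem_comap]
      change (G.subtype x) ∈ M ↔ x ∈ N
      rw [← SetLike.mem_coe, ← SetLike.mem_coe (p := N)]
      rw [Subgroup.coe_subtype]
      rw [hMset]
      rw [← closure_subtype]
      rw [hNcl.closure_eq]
    haveI hMnorm : M.Normal := by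
      constructor
      intro m hm k
      have step1 : ∀ g : ↥G, ∀ x ∈ (M : Set K), (g : K) * x * (g : K)⁻¹ ∈ (M : Set K) := by
        intro g x hx
        rw [hMset] at hx ⊢
        have hcont : Continuous fun y : K => (g : K) * y * (g : K)⁻¹ :=
          (continuous_const.mul continuous_id).mul continuous_const
        have himg : (fun y : K => (g : K) * y * (g : K)⁻¹) '' (Subtype.val '' (N : Set ↥G))
            ⊆ Subtype.val '' (N : Set ↥G) := by
          rintro _ ⟨_, ⟨nn, hnn, rfl⟩, rfl⟩
          exact ⟨g * nn * g⁻¹, hNnorm.conj_mem nn hnn g, rfl⟩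
        have h1 : (g : K) * x * (g : K)⁻¹ ∈
            (fun y : K => (g : K) * y * (g : K)⁻¹) '' closure (Subtype.val '' (N : Set ↥G)) :=
          ⟨x, hx, rfl⟩
        have h2 := image_closure_subset_closure_image (f := fun y : K => (g : K) * y * (g : K)⁻¹)
          (s := Subtype.val '' (N : Set ↥G)) hcont h1
        exact closure_mono himg h2
      have hTcl : IsClosed {k : K | k * m * k⁻¹ ∈ (M : Set K)} :=
        hMcl.preimage ((continuous_id.mul continuous_const).mul continuous_inv)
      have hGsub : (G : Set K) ⊆ {k : K | k * m * k⁻¹ ∈ (M : Set K)} :=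
        fun g hg => step1 ⟨g, hg⟩ m hm
      have huniv : (Set.univ : Set K) ⊆ {k : K | k * m * k⁻¹ ∈ (M : Set K)} := by
        rw [← hd.closure_eq]
        exact closure_minimal hGsub hTcl
      exact huniv (Set.mem_univ k)
    -- the quotient K ⧸ M is a Lie group
    set ψ := (QuotientGroup.mk' M).comp G.subtype with hψ
    have hker : ∀ g : ↥G, ψ g = 1 ↔ g ∈ N := by
      intro g
      rw [hψ]
      simp only [MonoidHom.comp_apply, QuotientGroup.mk'_apply, Subgroup.coe_subtype]
      rw [QuotientGroup.eq_one_iff, ← hφM, Subgroup.mem_comap]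
      rfl
    set j := QuotientGroup.lift N ψ (fun g hg => (hker g).mpr hg) with hj
    have hjmk : ∀ g : ↥G, j (QuotientGroup.mk g) = QuotientGroup.mk (g : K) := fun g => rfl
    have hjc : Continuous j := by
      rw [(QuotientGroup.isQuotientMap_mk N).continuous_iff]
      exact QuotientGroup.continuous_mk.comp continuous_subtype_val
    have hjinj : Function.Injective j := by
      rw [injective_iff_map_eq_one]
      intro a ha
      obtain ⟨g, rfl⟩ := QuotientGroup.mk_surjective a
      rw [hjmk] at ha
      rw [QuotientGroup.eq_one_iff]
      rw [← hker g]
      exact ha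
    have hpcq : Pseudocompact (↥G ⧸ N) :=
      pseudocompact_of_surj QuotientGroup.continuous_mk QuotientGroup.mk_surjective hpc
    haveI : CompactSpace (↥G ⧸ N) := isLieGroupTop_compactSpace hNlie hpcq
    have hrange : Set.range ⇑j = (QuotientGroup.mk : K → K ⧸ M) '' (G : Set K) := by
      ext q
      constructor
      · rintro ⟨a, rfl⟩
        obtain ⟨g, rfl⟩ := QuotientGroup.mk_surjective a
        exact ⟨(g : K), g.2, (hjmk g).symm⟩
      · rintro ⟨k, hk, rfl⟩
        exact ⟨QuotientGroup.mk ⟨k, hk⟩, hjmk _⟩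
    have hdense : Dense (Set.range ⇑j) := by
      rw [hrange]
      intro q
      obtain ⟨k, rfl⟩ := QuotientGroup.mk_surjective q
      have h1 : (QuotientGroup.mk : K → K ⧸ M) '' closure (G : Set K) ⊆
          closure ((QuotientGroup.mk : K → K ⧸ M) '' (G : Set K)) :=
        image_closure_subset_closure_image QuotientGroup.continuous_mk
      rw [hd.closure_eq] at h1
      exact h1 ⟨k, trivial, rfl⟩
    have hjsurj : Function.Surjective ⇑j := by
      have hcomp : IsCompact (Set.range ⇑j) := isCompact_range hjc
      rw [← Set.range_eq_univ, ← hcomp.isClosed.closure_eq]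
      exact hdense.closure_eq
    set e := MulEquiv.ofBijective j ⟨hjinj, hjsurj⟩ with he
    have hcoe : ⇑e.toEquiv = ⇑j := rfl
    have hc1 : Continuous ⇑e := hjc
    have hc2 : Continuous ⇑e.symm := by
      rw [← MulEquiv.coe_toEquiv_symm]
      exact (Continuous.homeoOfEquivCompactToT2 (f := e.toEquiv) (hcoe ▸ hjc)).symm.continuous
    have hlieM : IsLieGroupTop (K ⧸ M) :=
      isLieGroupTop_of_mulEquiv e hc1 hc2 hNlie
    exact ⟨M, ⟨hMcl, hMnorm, hlieM⟩, hφM⟩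
  have hbij : Set.BijOn (fun M : Subgroup K => M.comap G.subtype) (coLieSubgroups K)
      (coLieSubgroups ↥G) := ⟨hMapsTo, hInjOn, hSurjOn⟩
  exact ⟨hbij, Cardinal.mk_congr (Set.BijOn.equiv _ hbij).symm⟩
end

section
/- Let G be a compact connected topological group of weight τ with infinite co-Lie character. Then cL(G) ≤ τ, i.e., cL(G) ≤ w(G). -/
open Cardinal Topology Pointwise

universe u

open scoped Manifold in
/-- A Lie group has no small subgroups. -/
lemma nss_of_lie (L : Type u) [TopologicalSpace L] [Group L] (hL : IsLieGroupTop L) :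
    ∃ U : Set L, IsOpen U ∧ (1 : L) ∈ U ∧ ∀ H : Subgroup L, (H : Set L) ⊆ U → H = ⊥ := by
  obtain ⟨n, cs, lie⟩ := hL
  letI := cs
  haveI := lie
  set E := EuclideanSpace ℝ (Fin n) with hE
  set I : ModelWithCorners ℝ E E := modelWithCornersSelf ℝ E with hI
  have hsm : ContMDiff (I.prod I) I ((⊤ : ℕ∞) : WithTop ℕ∞) (fun p : L × L => p.1 * p.2) :=
    contMDiff_mul I _
  obtain ⟨hcontmul, hrep⟩ := contMDiff_iff.mp hsm
  set e := extChartAt I (1 : L) with he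
  set c : E := e 1 with hc
  set P := extChartAt (I.prod I) ((1 : L), (1 : L)) with hPdef
  have hP : P = e.prod e := extChartAt_prod ((1 : L), (1 : L))
  set μ : E × E → E := ⇑e ∘ (fun p : L × L => p.1 * p.2) ∘ ⇑P.symm with hμdef
  set T' : Set (E × E) :=
      P.target ∩ ⇑P.symm ⁻¹' ((fun p : L × L => p.1 * p.2) ⁻¹' e.source) with hT'def
  have hμ := hrep ((1 : L), (1 : L)) 1
  have hPsymm : ∀ q : E × E, P.symm q = (e.symm q.1, e.symm q.2) := by
    intro q; rw [hP, PartialEquiv.prod_symm]; rfl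
  have hPt : P.target = e.target ×ˢ e.target := by rw [hP]; rfl
  have hμval : ∀ q : E × E, μ q = e (e.symm q.1 * e.symm q.2) := by
    intro q; simp only [hμdef, Function.comp_apply, hPsymm]
  have hT'o : IsOpen T' := by
    have h2 : ContinuousOn P.symm P.target := continuousOn_extChartAt_symm _
    have h3 : IsOpen ((fun p : L × L => p.1 * p.2) ⁻¹' e.source) :=
      (isOpen_extChartAt_source _).preimage hcontmul
    exact h2.isOpen_inter_preimage (isOpen_extChartAt_target _) h3
  have hsymmc : e.symm c = 1 := e.left_inv (mem_extChartAt_source _)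
  have hcc : ((c, c) : E × E) ∈ T' := by
    constructor
    · rw [hPt]; exact ⟨mem_extChartAt_target _, mem_extChartAt_target _⟩
    · show P.symm (c, c) ∈ (fun p : L × L => p.1 * p.2) ⁻¹' e.source
      rw [hPsymm]
      show e.symm c * e.symm c ∈ e.source
      rw [hsymmc, mul_one]
      exact mem_extChartAt_source _
  have hdAt : ∀ q ∈ T', DifferentiableAt ℝ μ q := fun q hq =>
    (hμ.differentiableOn (by simp)).differentiableAt (hT'o.mem_nhds hq)
  set A := fderiv ℝ μ (c, c) with hA
  -- A (0, v) = v
  have hA0 : ∀ v : E, A (0, v) = v := by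
    set Φ : E →L[ℝ] E × E := (0 : E →L[ℝ] E).prod (ContinuousLinearMap.id ℝ E) with hΦ
    have hg : HasFDerivAt (fun w : E => ((c : E), w)) Φ c :=
      HasFDerivAt.prodMk (hasFDerivAt_const c c) (hasFDerivAt_id c)
    have hAg : HasFDerivAt (μ ∘ fun w : E => ((c : E), w)) (A.comp Φ) c :=
      ((hdAt _ hcc).hasFDerivAt).comp c hg
    have heq : (μ ∘ fun w : E => ((c : E), w)) =ᶠ[𝓝 c] id := by
      have hWo : IsOpen {w : E | ((c, w) : E × E) ∈ T'} :=
        hT'o.preimage (continuous_const.prodMk continuous_id)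
      refine Filter.eventually_of_mem (hWo.mem_nhds hcc) ?_
      intro w hw
      have hwt : w ∈ e.target := by
        have := hw.1; rw [hPt] at this; exact this.2
      show μ (c, w) = w
      rw [hμval, hsymmc, one_mul, e.right_inv hwt]
    have h_id : HasFDerivAt (μ ∘ fun w : E => ((c : E), w)) (ContinuousLinearMap.id ℝ E) c :=
      (hasFDerivAt_id c).congr_of_eventuallyEq heq
    have huniq : A.comp Φ = ContinuousLinearMap.id ℝ E := hAg.unique h_id
    intro v
    have := DFunLike.congr_fun huniq v
    simpa [Φ] using this
  -- ball on which derivative is 1/2-close to A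
  have hcont : ContinuousOn (fderiv ℝ μ) T' :=
    hμ.continuousOn_fderiv_of_isOpen hT'o (by exact_mod_cast le_top)
  have hca : ContinuousAt (fderiv ℝ μ) (c, c) := hcont.continuousAt (hT'o.mem_nhds hcc)
  obtain ⟨r, hr0, hrball⟩ : ∃ r > 0, Metric.ball ((c, c) : E × E) r ⊆
      T' ∩ {p | ‖fderiv ℝ μ p - A‖ < 1 / 2} := by
    have hmem : T' ∩ {p | ‖fderiv ℝ μ p - A‖ < 1 / 2} ∈ 𝓝 ((c, c) : E × E) := by
      refine Filter.inter_mem (hT'o.mem_nhds hcc) ?_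
      have hball : Metric.ball A (1 / 2) ∈ 𝓝 A := Metric.ball_mem_nhds _ (by norm_num)
      filter_upwards [hca.preimage_mem_nhds hball] with p hp
      show ‖fderiv ℝ μ p - A‖ < 1 / 2
      rw [← dist_eq_norm]; exact hp
    rcases Metric.mem_nhds_iff.mp hmem with ⟨r, hr0, hr⟩
    exact ⟨r, hr0, hr⟩
  -- key estimate
  have hkey : ∀ q₁ q₂ : E, dist q₁ c < r → dist q₂ c < r →
      ‖μ (q₁, q₂) - q₁ - (q₂ - c)‖ ≤ 1 / 2 * ‖q₂ - c‖ := by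
    intro q₁ q₂ h1 h2
    have hx : ((q₁, c) : E × E) ∈ Metric.ball ((c, c) : E × E) r := by
      rw [Metric.mem_ball, Prod.dist_eq]
      simpa [hr0] using h1
    have hy : ((q₁, q₂) : E × E) ∈ Metric.ball ((c, c) : E × E) r := by
      rw [Metric.mem_ball, Prod.dist_eq]
      exact max_lt h1 h2
    have hder : ∀ p ∈ Metric.ball ((c, c) : E × E) r,
        HasFDerivWithinAt μ (fderiv ℝ μ p) (Metric.ball ((c, c) : E × E) r) p :=
      fun p hp => ((hdAt p (hrball hp).1).hasFDerivAt).hasFDerivWithinAt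
    have hbound : ∀ p ∈ Metric.ball ((c, c) : E × E) r, ‖fderiv ℝ μ p - A‖ ≤ 1 / 2 :=
      fun p hp => (hrball hp).2.le
    have hmvt := (convex_ball ((c, c) : E × E) r).norm_image_sub_le_of_norm_hasFDerivWithin_le'
      hder hbound hx hy
    have hq1t : q₁ ∈ e.target := by
      have := (hrball hx).1.1; rw [hPt] at this; exact this.1
    have hqc : μ (q₁, c) = q₁ := by
      rw [hμval, hsymmc, mul_one, e.right_inv hq1t]
    have hsub : ((q₁, q₂) : E × E) - (q₁, c) = (0, q₂ - c) := by
      simp [Prod.ext_iff]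
    rw [hsub, hA0, hqc] at hmvt
    have hnorm : ‖((0 : E), q₂ - c)‖ = ‖q₂ - c‖ := by
      simp [Prod.norm_def]
    rwa [hnorm] at hmvt
  -- the neighbourhood
  refine ⟨e.source ∩ ⇑e ⁻¹' Metric.ball c r,
    (continuousOn_extChartAt _).isOpen_inter_preimage (isOpen_extChartAt_source _)
      Metric.isOpen_ball,
    ⟨mem_extChartAt_source _, by simpa [Metric.mem_ball, ← hc] using hr0⟩, ?_⟩
  intro H hH
  rw [Subgroup.eq_bot_iff_forall]
  intro h hh
  have hmemU : ∀ k : ℕ, h ^ k ∈ e.source ∩ ⇑e ⁻¹' Metric.ball c r :=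
    fun k => hH (pow_mem hh k)
  have hh1 : h ∈ e.source ∩ ⇑e ⁻¹' Metric.ball c r := hH hh
  set v : E := e h - c with hv
  have hiter : ∀ k : ℕ, ‖e (h ^ k) - c - k • v‖ ≤ k * (1 / 2 * ‖v‖) := by
    intro k
    induction k with
    | zero => simp [← hc]
    | succ k ih =>
      have hq1 : dist (e (h ^ k)) c < r := by
        simpa [Metric.mem_ball] using (hmemU k).2
      have hq2 : dist (e h) c < r := by
        simpa [Metric.mem_ball] using hh1.2
      have hstep := hkey (e (h ^ k)) (e h) hq1 hq2
      have hmul : μ (e (h ^ k), e h) = e (h ^ (k + 1)) := by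
        rw [hμval]
        simp only [e.left_inv (hmemU k).1, e.left_inv hh1.1]
        rw [← pow_succ]
      rw [hmul] at hstep
      calc ‖e (h ^ (k + 1)) - c - (k + 1) • v‖
          = ‖(e (h ^ (k + 1)) - e (h ^ k) - v) + (e (h ^ k) - c - k • v)‖ := by
            rw [succ_nsmul]; congr 1; abel
        _ ≤ ‖e (h ^ (k + 1)) - e (h ^ k) - v‖ + ‖e (h ^ k) - c - k • v‖ := norm_add_le _ _
        _ ≤ 1 / 2 * ‖v‖ + k * (1 / 2 * ‖v‖) := add_le_add hstep ih
        _ = (↑(k + 1) : ℝ) * (1 / 2 * ‖v‖) := by push_cast; ring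
  have hvz : v = 0 := by
    by_contra hv0
    have hvpos : 0 < ‖v‖ := norm_pos_iff.mpr hv0
    have hbd : ∀ k : ℕ, (k : ℝ) * (1 / 2 * ‖v‖) < r := by
      intro k
      have h1 : ‖(k • v : E)‖ ≤ ‖e (h ^ k) - c‖ + ‖e (h ^ k) - c - k • v‖ := by
        calc ‖(k • v : E)‖ = ‖(e (h ^ k) - c) - (e (h ^ k) - c - k • v)‖ := by congr 1; abel
          _ ≤ ‖e (h ^ k) - c‖ + ‖e (h ^ k) - c - k • v‖ := norm_sub_le _ _
      have h2 : ‖e (h ^ k) - c‖ < r := by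
        have := (hmemU k).2
        rw [← dist_eq_norm]; simpa [Metric.mem_ball] using this
      have h3 : ‖(k • v : E)‖ = (k : ℝ) * ‖v‖ := by
        rw [← Nat.cast_smul_eq_nsmul ℝ, norm_smul]
        simp
      have := h1.trans_lt (add_lt_add_of_lt_of_le h2 (hiter k))
      rw [h3] at this
      nlinarith
    obtain ⟨k, hk⟩ := exists_nat_gt (r / (1 / 2 * ‖v‖))
    have hpos : (0 : ℝ) < 1 / 2 * ‖v‖ := by positivity
    have := hbd k
    rw [div_lt_iff₀ hpos] at hk
    linarith
  have hehc : e h = e 1 := by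
    have : e h = c := by rwa [sub_eq_zero] at hvz
    rw [this, hc]
  exact e.injOn hh1.1 (mem_extChartAt_source _) hehc


theorem statement_14 (G : Type u) [TopologicalSpace G] [Group G] [IsTopologicalGroup G] [T2Space G]
    [CompactSpace G] [ConnectedSpace G] (hcl : ℵ₀ ≤ cL G) :
    cL G ≤ wt G := by
  classical
  obtain ⟨B, hB, hBcard⟩ : ∃ B : Set (Set G), TopologicalSpace.IsTopologicalBasis B ∧
      Cardinal.mk B = wt G := by
    have hne : {c : Cardinal | ∃ B : Set (Set G),
        TopologicalSpace.IsTopologicalBasis B ∧ #B = c}.Nonempty :=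
      ⟨#{U : Set G | IsOpen U}, {U | IsOpen U}, TopologicalSpace.isTopologicalBasis_opens, rfl⟩
    exact csInf_mem hne
  have hassign : ∀ N : coLieSubgroups G, ∃ S : Set (Set G),
      S ⊆ B ∧ S.Finite ∧ ((N : Subgroup G) : Set G) ⊆ ⋃₀ S ∧
      ∀ M : Subgroup G, (M : Set G) ⊆ ⋃₀ S → M ≤ (N : Subgroup G) := by
    rintro ⟨N, hNcl, hNn, hNlie⟩
    haveI := hNn
    obtain ⟨U, hUo, hU1, hUkill⟩ := nss_of_lie (G ⧸ N) hNlie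
    set π : G →* G ⧸ N := QuotientGroup.mk' N with hπ
    have hπc : Continuous (π : G → G ⧸ N) := continuous_quot_mk
    set V : Set G := (π : G → G ⧸ N) ⁻¹' U with hV
    have hVo : IsOpen V := hUo.preimage hπc
    have hNV : (N : Set G) ⊆ V := by
      intro x hx
      show (π x : G ⧸ N) ∈ U
      have hx1 : (π x : G ⧸ N) = 1 := (QuotientGroup.eq_one_iff x).mpr hx
      rw [hx1]; exact hU1
    have hNcpt : IsCompact (N : Set G) := hNcl.isCompact
    have hcover : (N : Set G) ⊆ ⋃ i : {b : Set G // b ∈ B ∧ b ⊆ V}, (i : Set G) := by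
      intro x hx
      obtain ⟨b, hbB, hxb, hbV⟩ := hB.exists_subset_of_mem_open (hNV hx) hVo
      exact Set.mem_iUnion.mpr ⟨⟨b, hbB, hbV⟩, hxb⟩
    obtain ⟨t, ht⟩ := hNcpt.elim_finite_subcover
      (fun i : {b : Set G // b ∈ B ∧ b ⊆ V} => (i : Set G)) (fun i => hB.isOpen i.2.1) hcover
    refine ⟨Subtype.val '' (t : Set {b : Set G // b ∈ B ∧ b ⊆ V}), ?_, ?_, ?_, ?_⟩
    · rintro b ⟨i, _, rfl⟩; exact i.2.1
    · exact t.finite_toSet.image _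
    · intro x hx
      obtain ⟨s, hs⟩ := Set.mem_iUnion.mp (ht hx)
      obtain ⟨hst, hxs⟩ := Set.mem_iUnion.mp hs
      exact ⟨s.1, ⟨s, hst, rfl⟩, hxs⟩
    · intro M hM
      have hSV : ⋃₀ (Subtype.val '' (t : Set {b : Set G // b ∈ B ∧ b ⊆ V})) ⊆ V := by
        rintro x ⟨s, ⟨i, _, rfl⟩, hxs⟩
        exact i.2.2 hxs
      have hMV : (M : Set G) ⊆ V := hM.trans hSV
      have hmb : M.map π = ⊥ := by
        refine hUkill (M.map π) ?_
        intro y hy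
        rw [Subgroup.coe_map] at hy
        obtain ⟨x, hx, rfl⟩ := hy
        exact hMV hx
      have := (Subgroup.map_eq_bot_iff M).mp hmb
      rwa [QuotientGroup.ker_mk'] at this
  choose S hSB hSfin hNS hSkill using hassign
  have hinj : Function.Injective S := by
    intro N₁ N₂ hEq
    have h12 : (N₁ : Subgroup G) ≤ (N₂ : Subgroup G) :=
      hSkill N₂ (N₁ : Subgroup G) (by rw [← hEq]; exact hNS N₁)
    have h21 : (N₂ : Subgroup G) ≤ (N₁ : Subgroup G) :=
      hSkill N₁ (N₂ : Subgroup G) (by rw [hEq]; exact hNS N₂)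
    exact Subtype.ext (le_antisymm h12 h21)
  have hcard1 : cL G ≤ #{S : Set (Set G) // S ⊆ B ∧ S.Finite} := by
    refine Cardinal.mk_le_of_injective
      (f := fun N : coLieSubgroups G =>
        (⟨S N, hSB N, hSfin N⟩ : {S : Set (Set G) // S ⊆ B ∧ S.Finite})) ?_
    intro a b hab
    exact hinj (congrArg Subtype.val hab)
  have hcard2 : #{S : Set (Set G) // S ⊆ B ∧ S.Finite} ≤ #(Finset ↥B) := by
    refine Cardinal.mk_le_of_injective
      (f := fun S : {S : Set (Set G) // S ⊆ B ∧ S.Finite} =>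
        (S.2.2.preimage (Set.injOn_of_injective Subtype.val_injective)).toFinset) ?_
    intro S₁ S₂ h
    have hpre : (Subtype.val ⁻¹' S₁.1 : Set ↥B) = Subtype.val ⁻¹' S₂.1 := by
      rwa [Set.Finite.toFinset_inj] at h
    apply Subtype.ext
    ext x
    constructor
    · intro hx
      have hxB : x ∈ B := S₁.2.1 hx
      have h1 : (⟨x, hxB⟩ : ↥B) ∈ (Subtype.val ⁻¹' S₁.1 : Set ↥B) := hx
      rw [hpre] at h1
      exact h1
    · intro hx
      have hxB : x ∈ B := S₂.2.1 hx
      have h1 : (⟨x, hxB⟩ : ↥B) ∈ (Subtype.val ⁻¹' S₂.1 : Set ↥B) := hx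
      rw [← hpre] at h1
      exact h1
  rcases finite_or_infinite ↥B with hf | hinf
  · exfalso
    haveI := Fintype.ofFinite ↥B
    have hlt : #(Finset ↥B) < ℵ₀ := Cardinal.mk_lt_aleph0_iff.mpr inferInstance
    exact lt_irrefl _ (lt_of_le_of_lt (hcl.trans (hcard1.trans hcard2)) hlt)
  · calc cL G ≤ #{S : Set (Set G) // S ⊆ B ∧ S.Finite} := hcard1
      _ ≤ #(Finset ↥B) := hcard2
      _ = #↥B := Cardinal.mk_finset_of_infinite _
      _ = wt G := hBcard
end
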